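/- Let T be any homeomorphism of a Cantor set Ω. Then for every ε > 0 and any finite list of Borel probability measures μ₁, …, μ_k on Ω there exists a homeomorphism P of Ω of finite order (there is an integer N ≥ 1 with P^N = identity) such that μᵢ(E(P, T)) < ε for every i = 1, …, k. That is, the homeomorphisms of finite order are dense in Homeo(Ω) with respect to the uniform topology τ. -/

import Mathlib

set_option linter.unusedSectionVars false
set_option linter.unusedVariables false
set_option maxHeartbeats 1000000
open MeasureTheory Set Function TopologicalSpace
open scoped ENNReal Classical
open Fin.NatCast
open Fin.CommRing

section Helpers
variable {Ω : Type*} [TopologicalSpace Ω] (T : Ω ≃ₜ Ω)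
lemma ts_cancel (a : ℕ) (x : Ω) : (⇑T.symm)^[a] ((⇑T)^[a] x) = x :=
  (Function.LeftInverse.iterate (fun y => T.symm_apply_apply y) a) x
lemma st_cancel (a : ℕ) (x : Ω) : (⇑T)^[a] ((⇑T.symm)^[a] x) = x :=
  (Function.LeftInverse.iterate (fun y => T.apply_symm_apply y) a) x
lemma image_iter (i : ℕ) (s : Set Ω) : (⇑T)^[i] '' s = ((⇑T.symm)^[i]) ⁻¹' s := by
  ext x
  constructor
  · rintro ⟨z, hz, rfl⟩
    simpa [ts_cancel T i z] using hz
  · intro hx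
    exact ⟨(⇑T.symm)^[i] x, hx, st_cancel T i x⟩
lemma cont_iter (i : ℕ) : Continuous ((⇑T)^[i]) := T.continuous.iterate i
lemma cont_iter_symm (i : ℕ) : Continuous ((⇑T.symm)^[i]) := T.symm.continuous.iterate i
lemma isClopen_image_iter {s : Set Ω} (hs : IsClopen s) (i : ℕ) :
    IsClopen ((⇑T)^[i] '' s) := by
  rw [image_iter]
  exact hs.preimage (cont_iter_symm T i)

lemma iter_reduce (a b : ℕ) (hba : b ≤ a) (x : Ω) :
    (⇑T.symm)^[b] ((⇑T)^[a] x) = (⇑T)^[a - b] x := by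
  conv_lhs => rw [show a = b + (a - b) by omega, Function.iterate_add_apply]
  rw [ts_cancel]

lemma iter_reduce' (a b : ℕ) (hab : a ≤ b) (x : Ω) :
    (⇑T.symm)^[b] ((⇑T)^[a] x) = (⇑T.symm)^[b - a] x := by
  conv_lhs => rw [show b = (b - a) + a by omega, Function.iterate_add_apply]
  congr 1
  rw [ts_cancel]

lemma iter_reduce2 (a b : ℕ) (hba : b ≤ a) (x : Ω) :
    (⇑T)^[b] ((⇑T.symm)^[a] x) = (⇑T.symm)^[a - b] x := by
  have := iter_reduce T.symm a b hba x
  simpa using this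

lemma iter_reduce2' (a b : ℕ) (hab : a ≤ b) (x : Ω) :
    (⇑T)^[b] ((⇑T.symm)^[a] x) = (⇑T)^[b - a] x := by
  have := iter_reduce' T.symm a b hab x
  simpa using this

lemma iter_inj (i : ℕ) : Function.Injective ((⇑T)^[i]) := by
  intro x y h
  have := congrArg ((⇑T.symm)^[i]) h
  simpa [ts_cancel] using this

end Helpers

section Castle
variable {Ω : Type*} [TopologicalSpace Ω] [CompactSpace Ω] [T2Space Ω]
variable (T : Ω ≃ₜ Ω)

/-- error set at the base of a block -/
def berr (p : Set Ω × ℕ) : Set Ω := {z | z ∈ p.1 ∧ (⇑T)^[p.2] z ≠ z}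

theorem castle_exists_P (bs : Finset (Set Ω × ℕ)) (H : ℕ)
    (hcl : ∀ p ∈ bs, IsClopen p.1)
    (hpos : ∀ p ∈ bs, 1 ≤ p.2)
    (hBd : ∀ p ∈ bs, p.2 ≤ H)
    (hH : 1 ≤ H)
    (hdisj : ∀ p ∈ bs, ∀ q ∈ bs, ∀ i j : ℕ, i < p.2 → j < q.2 → ¬(p = q ∧ i = j) →
      Disjoint ((⇑T)^[i] '' p.1) ((⇑T)^[j] '' q.1))
    (hcover : ∀ x : Ω, ∃ p ∈ bs, ∃ i, i < p.2 ∧ x ∈ (⇑T)^[i] '' p.1) :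
    ∃ P : Ω ≃ₜ Ω, (∃ N : ℕ, 1 ≤ N ∧ ∀ x : Ω, (⇑P)^[N] x = x) ∧
      ({x | P x ≠ T x} ⊆ ⋃ p ∈ bs, (⇑T)^[p.2 - 1] '' berr T p) ∧
      ({x | P.symm x ≠ T.symm x} ⊆ ⋃ p ∈ bs, berr T p) := by
  classical
  have hexists : ∀ x : Ω, ∃ pc : (Set Ω × ℕ) × ℕ,
      pc.1 ∈ bs ∧ pc.2 < pc.1.2 ∧ (⇑T.symm)^[pc.2] x ∈ pc.1.1 := by
    intro x
    obtain ⟨p, hp, i, hi, hx⟩ := hcover x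
    rw [image_iter] at hx
    exact ⟨(p, i), hp, hi, hx⟩
  let D : Ω → (Set Ω × ℕ) × ℕ := fun x => Classical.choose (hexists x)
  have hD : ∀ x, (D x).1 ∈ bs ∧ (D x).2 < (D x).1.2 ∧ (⇑T.symm)^[(D x).2] x ∈ (D x).1.1 :=
    fun x => Classical.choose_spec (hexists x)
  have uniq : ∀ (x : Ω) (p : Set Ω × ℕ) (i : ℕ), p ∈ bs → i < p.2 →
      (⇑T.symm)^[i] x ∈ p.1 → (D x).1 = p ∧ (D x).2 = i := by
    intro x p i hp hi hx
    by_contra hc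
    have h1 := hD x
    have hdis := hdisj _ h1.1 _ hp _ _ h1.2.1 hi hc
    have m1 : x ∈ (⇑T)^[(D x).2] '' (D x).1.1 := by
      rw [image_iter]; exact h1.2.2
    have m2 : x ∈ (⇑T)^[i] '' p.1 := by
      rw [image_iter]; exact hx
    exact Set.disjoint_left.1 hdis m1 m2
  -- transport lemmas
  have tbase : ∀ x : Ω, (D ((⇑T.symm)^[(D x).2] x)).1 = (D x).1 ∧
      (D ((⇑T.symm)^[(D x).2] x)).2 = 0 := by
    intro x
    have h := hD x
    exact uniq _ _ _ h.1 (lt_of_lt_of_le (Nat.zero_lt_one) (hpos _ h.1)) (by simpa using h.2.2)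
  have tlevel : ∀ z : Ω, (D z).2 = 0 → ∀ i, i < (D z).1.2 →
      (D ((⇑T)^[i] z)).1 = (D z).1 ∧ (D ((⇑T)^[i] z)).2 = i := by
    intro z h0 i hi
    apply uniq _ _ _ (hD z).1 hi
    rw [ts_cancel]
    have := (hD z).2.2
    rw [h0] at this
    simpa using this
  have tnext : ∀ x : Ω, (D x).2 + 1 < (D x).1.2 →
      (D (T x)).1 = (D x).1 ∧ (D (T x)).2 = (D x).2 + 1 := by
    intro x hx
    apply uniq _ _ _ (hD x).1 hx
    rw [Function.iterate_succ_apply]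
    simpa using (hD x).2.2
  have tprev : ∀ x : Ω, (D x).2 ≠ 0 →
      (D (T.symm x)).1 = (D x).1 ∧ (D (T.symm x)).2 = (D x).2 - 1 := by
    intro x hx
    have hlt : (D x).2 - 1 < (D x).1.2 := by
      have := (hD x).2.1; omega
    apply uniq _ _ _ (hD x).1 hlt
    have h2 := (hD x).2.2
    rw [show (D x).2 = ((D x).2 - 1) + 1 from by omega, Function.iterate_succ_apply] at h2
    exact h2
  -- the maps
  set Pf : Ω → Ω := fun x => if (D x).2 + 1 = (D x).1.2 then (⇑T.symm)^[(D x).2] x else T x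
    with hPf
  set Pg : Ω → Ω := fun x => if (D x).2 = 0 then (⇑T)^[(D x).1.2 - 1] x else T.symm x
    with hPg
  have hleft : ∀ x : Ω, Pg (Pf x) = x := by
    intro x
    by_cases htop : (D x).2 + 1 = (D x).1.2
    · have hPfx : Pf x = (⇑T.symm)^[(D x).2] x := by rw [hPf]; simp [htop]
      have hb := tbase x
      rw [hPfx, hPg]
      simp only [hb.1, hb.2, if_pos rfl]
      have h2 : (D x).1.2 - 1 = (D x).2 := by omega
      rw [h2, st_cancel]
      simp
    · have hlt : (D x).2 + 1 < (D x).1.2 := lt_of_le_of_ne (hD x).2.1 htop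
      have hPfx : Pf x = T x := by rw [hPf]; simp [htop]
      have hn := tnext x hlt
      rw [hPfx, hPg]
      simp only [hn.1, hn.2]
      rw [if_neg (by omega)]
      exact T.symm_apply_apply x
  have hright : ∀ x : Ω, Pf (Pg x) = x := by
    intro x
    by_cases hb : (D x).2 = 0
    · have hPgx : Pg x = (⇑T)^[(D x).1.2 - 1] x := by rw [hPg]; simp [hb]
      have hl := tlevel x hb ((D x).1.2 - 1) (by have := hpos _ (hD x).1; omega)
      rw [hPgx, hPf]
      simp only [hl.1, hl.2]
      rw [if_pos (by have := hpos _ (hD x).1; omega), ts_cancel]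
    · have hPgx : Pg x = T.symm x := by rw [hPg]; simp [hb]
      have hp := tprev x hb
      rw [hPgx, hPf]
      simp only [hp.1, hp.2]
      rw [if_neg (by have := (hD x).2.1; omega)]
      exact T.apply_symm_apply x
  have hPfcont : Continuous Pf := by
    rw [continuous_iff_continuousAt]
    intro x₀
    set g : Ω → Ω := if (D x₀).2 + 1 = (D x₀).1.2 then (⇑T.symm)^[(D x₀).2] else ⇑T with hg
    have hgc : Continuous g := by
      rw [hg]
      split
      · exact cont_iter_symm T _
      · exact T.continuous
    have hN : IsClopen ((⇑T)^[(D x₀).2] '' (D x₀).1.1) :=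
      isClopen_image_iter T (hcl _ (hD x₀).1) _
    have hx₀N : x₀ ∈ (⇑T)^[(D x₀).2] '' (D x₀).1.1 := by
      rw [image_iter]; exact (hD x₀).2.2
    apply hgc.continuousAt.congr
    filter_upwards [hN.isOpen.mem_nhds hx₀N] with y hy
    rw [image_iter] at hy
    have hDy := uniq y _ _ (hD x₀).1 (hD x₀).2.1 hy
    rw [hPf, hg]
    simp only [hDy.1, hDy.2]
    split <;> rfl
  let e : Ω ≃ Ω := ⟨Pf, Pg, hleft, hright⟩
  let P : Ω ≃ₜ Ω := Continuous.homeoOfEquivCompactToT2 (f := e) hPfcont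
  have hPcoe : ⇑P = Pf := rfl
  have hPscoe : ⇑P.symm = Pg := rfl
  refine ⟨P, ⟨H.factorial, Nat.one_le_iff_ne_zero.2 (Nat.factorial_ne_zero H), ?_⟩, ?_, ?_⟩
  · -- finite order
    have l3 : ∀ z : Ω, (D z).2 = 0 → ∀ i, i < (D z).1.2 → Pf^[i] z = (⇑T)^[i] z := by
      intro z h0
      intro i
      induction i with
      | zero => intro _; simp
      | succ i ih =>
        intro hi
        have hii : i < (D z).1.2 := by omega
        rw [Function.iterate_succ_apply', Function.iterate_succ_apply', ih hii]
        have hl := tlevel z h0 i hii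
        rw [hPf]
        simp only [hl.1, hl.2]
        rw [if_neg (by omega)]
    have l2 : ∀ z : Ω, (D z).2 = 0 → Pf^[(D z).1.2] z = z := by
      intro z h0
      have hp1 := hpos _ (hD z).1
      have : (D z).1.2 = ((D z).1.2 - 1) + 1 := by omega
      rw [this, Function.iterate_succ_apply', l3 z h0 _ (by omega)]
      have hl := tlevel z h0 ((D z).1.2 - 1) (by omega)
      rw [hPf]
      simp only [hl.1, hl.2]
      rw [if_pos (by omega), ts_cancel]
    have l3' : ∀ x : Ω, Pf^[(D x).1.2] x = x := by
      intro x
      have hb := tbase x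
      set z := (⇑T.symm)^[(D x).2] x with hz
      have hxz : x = (⇑T)^[(D x).2] z := by rw [hz, st_cancel]
      have hiz : Pf^[(D x).2] z = x := by
        rw [l3 z hb.2 _ (by rw [hb.1]; exact (hD x).2.1), ← hxz]
      calc Pf^[(D x).1.2] x = Pf^[(D x).1.2] (Pf^[(D x).2] z) := by rw [hiz]
        _ = Pf^[(D x).2] (Pf^[(D x).1.2] z) := by
            rw [← Function.iterate_add_apply, ← Function.iterate_add_apply, Nat.add_comm]
        _ = Pf^[(D x).2] z := by
            rw [← hb.1] at *
            rw [l2 z hb.2]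
        _ = x := hiz
    intro x
    have hdvd : (D x).1.2 ∣ H.factorial :=
      Nat.dvd_factorial (hpos _ (hD x).1) (hBd _ (hD x).1)
    obtain ⟨c, hc⟩ := hdvd
    rw [hPcoe, hc, Function.iterate_mul]
    exact Function.iterate_fixed (l3' x) c
  · -- error of P vs T
    intro x hx
    simp only [Set.mem_setOf_eq, hPcoe] at hx
    by_cases htop : (D x).2 + 1 = (D x).1.2
    · have hPfx : Pf x = (⇑T.symm)^[(D x).2] x := by rw [hPf]; simp [htop]
      set z := (⇑T.symm)^[(D x).2] x with hz
      have hzmem : z ∈ (D x).1.1 := (hD x).2.2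
      have hne : (⇑T)^[(D x).1.2] z ≠ z := by
        intro heq
        apply hx
        have hTx : T x = (⇑T)^[(D x).1.2] z := by
          have hx2 : x = (⇑T)^[(D x).2] z := (st_cancel T _ x).symm
          calc T x = T ((⇑T)^[(D x).2] z) := by rw [← hx2]
            _ = (⇑T)^[(D x).2 + 1] z := (Function.iterate_succ_apply' (⇑T) _ z).symm
            _ = (⇑T)^[(D x).1.2] z := by rw [htop]
        rw [hPfx, hTx, heq]
      refine Set.mem_biUnion (hD x).1 ?_
      refine ⟨z, ⟨hzmem, hne⟩, ?_⟩
      rw [hz]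
      have : (D x).1.2 - 1 = (D x).2 := by omega
      rw [this, st_cancel]
    · exfalso
      apply hx
      rw [hPf]
      simp [htop]
  · -- error of P.symm vs T.symm
    intro x hx
    simp only [Set.mem_setOf_eq, hPscoe] at hx
    by_cases hb : (D x).2 = 0
    · have hPgx : Pg x = (⇑T)^[(D x).1.2 - 1] x := by rw [hPg]; simp [hb]
      have hxmem : x ∈ (D x).1.1 := by
        have := (hD x).2.2
        rw [hb] at this
        simpa using this
      have hne : (⇑T)^[(D x).1.2] x ≠ x := by
        intro heq
        apply hx
        rw [hPgx]
        have h1 : (D x).1.2 = ((D x).1.2 - 1) + 1 := by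
          have := hpos _ (hD x).1; omega
        have : T.symm x = T.symm ((⇑T)^[(D x).1.2] x) := by rw [heq]
        rw [this, h1, Function.iterate_succ_apply', T.symm_apply_apply]
        simp
      exact Set.mem_biUnion (hD x).1 ⟨hxmem, hne⟩
    · exfalso
      apply hx
      rw [hPg]
      simp [hb]

end Castle

section Partitions
variable {Ω : Type*} [MetricSpace Ω] [CompactSpace Ω] [TotallyDisconnectedSpace Ω]

lemma exists_clopen_between {x : Ω} {G : Set Ω} (hG : IsOpen G) (hx : x ∈ G) :
    ∃ C : Set Ω, IsClopen C ∧ x ∈ C ∧ C ⊆ G := by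
  obtain ⟨C, hC, hxC, hCG⟩ := isTopologicalBasis_isClopen.exists_subset_of_mem_open hx hG
  exact ⟨C, hC, hxC, hCG⟩

lemma partition_of_list (δ : ℝ) (l : List (Set Ω))
    (hcl : ∀ s ∈ l, IsClopen s)
    (hsmall : ∀ s ∈ l, ∀ x y : Ω, x ∈ s → y ∈ s → dist x y ≤ δ) :
    ∃ f : Ω → ℕ, (∀ v, IsClopen {x | f x = v}) ∧
      (∀ x, f x ≤ l.length) ∧
      (∀ x y, f x = f y → f x < l.length → dist x y ≤ δ) ∧
      (∀ x, (∃ s ∈ l, x ∈ s) → f x < l.length) := by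
  classical
  induction l with
  | nil =>
    refine ⟨fun _ => 0, ?_, ?_, ?_, ?_⟩
    · intro v
      by_cases h : v = 0
      · subst h
        convert isClopen_univ using 1
        ext x; simp
      · convert isClopen_empty using 1
        ext x; simp [Ne.symm h]
    · intro x; simp
    · intro x y _ h; simp at h
    · intro x ⟨s, hs, _⟩; simp at hs
  | cons s l ih =>
    obtain ⟨f', h1, h2, h3, h4⟩ := ih (fun u hu => hcl u (List.mem_cons_of_mem s hu))
      (fun u hu => hsmall u (List.mem_cons_of_mem s hu))
    have hscl : IsClopen s := hcl s (List.mem_cons_self)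
    refine ⟨fun x => if x ∈ s then 0 else f' x + 1, ?_, ?_, ?_, ?_⟩
    · intro v
      match v with
      | 0 =>
        have : {x : Ω | (if x ∈ s then 0 else f' x + 1) = 0} = s := by
          ext x
          by_cases hx : x ∈ s <;> simp [hx]
        rw [this]; exact hscl
      | v + 1 =>
        have : {x : Ω | (if x ∈ s then 0 else f' x + 1) = v + 1} = sᶜ ∩ {x | f' x = v} := by
          ext x
          by_cases hx : x ∈ s <;> simp [hx]
        rw [this]; exact hscl.compl.inter (h1 v)
    · intro x
      by_cases hx : x ∈ s <;> simp [hx]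
      exact h2 x
    · intro x y hxy hflt
      by_cases hx : x ∈ s <;> by_cases hy : y ∈ s
      · exact hsmall s (List.mem_cons_self) x y hx hy
      · simp [hx, hy] at hxy
      · simp [hx, hy] at hxy
      · simp only [if_neg hx, if_neg hy] at hxy
        simp only [if_neg hx, List.length_cons] at hflt
        have hfe : f' x = f' y := by omega
        exact h3 x y hfe (by omega)
    · intro x ⟨u, hu, hxu⟩
      by_cases hx : x ∈ s
      · simp [hx]
      · simp only [if_neg hx, List.length_cons]
        rcases List.mem_cons.1 hu with rfl | hul
        · exact absurd hxu hx
        · have := h4 x ⟨u, hul, hxu⟩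
          omega
  
lemma exists_partition_fun (δ : ℝ) (hδ : 0 < δ) :
    ∃ f : Ω → ℕ, (∀ v, IsClopen {x | f x = v}) ∧ ((Set.range f).Finite) ∧
      (∀ x y, f x = f y → dist x y ≤ δ) := by
  classical
  have hcov : ∀ x : Ω, ∃ C : Set Ω, IsClopen C ∧ x ∈ C ∧ C ⊆ Metric.ball x (δ/2) := by
    intro x
    exact exists_clopen_between Metric.isOpen_ball (Metric.mem_ball_self (by linarith))
  choose Cf hCf1 hCf2 hCf3 using hcov
  obtain ⟨t, ht⟩ := IsCompact.elim_finite_subcover isCompact_univ Cf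
    (fun x => (hCf1 x).2) (fun x _ => Set.mem_iUnion.2 ⟨x, hCf2 x⟩)
  set l : List (Set Ω) := t.toList.map Cf with hl
  have hmem : ∀ u ∈ l, ∃ c, u = Cf c := by
    intro u hu
    rw [hl] at hu
    obtain ⟨c, _, rfl⟩ := List.mem_map.1 hu
    exact ⟨c, rfl⟩
  obtain ⟨f, h1, h2, h3, h4⟩ := partition_of_list δ l
    (by intro u hu; obtain ⟨c, rfl⟩ := hmem u hu; exact hCf1 c)
    (by
      intro u hu x y hx hy
      obtain ⟨c, rfl⟩ := hmem u hu
      have hx2 := hCf3 _ hx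
      have hy2 := hCf3 _ hy
      rw [Metric.mem_ball] at hx2 hy2
      calc dist x y ≤ dist x c + dist c y := dist_triangle _ _ _
        _ ≤ δ/2 + δ/2 := by rw [dist_comm c y]; exact add_le_add hx2.le hy2.le
        _ = δ := by ring)
  have hcov' : ∀ x : Ω, ∃ u ∈ l, x ∈ u := by
    intro x
    have := ht (Set.mem_univ x)
    rw [Set.mem_iUnion₂] at this
    obtain ⟨c, hc, hxc⟩ := this
    exact ⟨Cf c, by rw [hl]; exact List.mem_map.2 ⟨c, Finset.mem_toList.2 hc, rfl⟩, hxc⟩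
  refine ⟨f, h1, ?_, ?_⟩
  · apply Set.Finite.subset (Set.finite_Iic l.length)
    rintro v ⟨x, rfl⟩
    exact h2 x
  · intro x y hxy
    exact h3 x y hxy (h4 x (hcov' x))

/-- nested sequence of finite clopen partitions with mesh going to 0 -/
lemma exists_mesh_seq :
    ∃ F : ℕ → Ω → ℕ,
      (∀ k v, IsClopen {x | F k x = v}) ∧
      (∀ k, (Set.range (F k)).Finite) ∧
      (∀ k x y, F (k+1) x = F (k+1) y → F k x = F k y) ∧
      (∀ k x y, F k x = F k y → dist x y ≤ 1/(k+1)) := by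
  classical
  have hg : ∀ k : ℕ, ∃ f : Ω → ℕ, (∀ v, IsClopen {x | f x = v}) ∧ ((Set.range f).Finite) ∧
      (∀ x y, f x = f y → dist x y ≤ 1/(k+1)) := by
    intro k
    apply exists_partition_fun
    positivity
  choose g hg1 hg2 hg3 using hg
  set F : ℕ → Ω → ℕ := fun k => Nat.rec (g 0) (fun k' Fk => fun x => Nat.pair (Fk x) (g (k'+1) x)) k
    with hF
  have hFsucc : ∀ k x, F (k+1) x = Nat.pair (F k x) (g (k+1) x) := fun k x => rfl
  have hFeq : ∀ k x y, F k x = F k y ↔ (∀ j ≤ k, g j x = g j y) := by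
    intro k
    induction k with
    | zero =>
      intro x y
      constructor
      · intro h j hj
        interval_cases j
        exact h
      · intro h
        exact h 0 le_rfl
    | succ k ih =>
      intro x y
      rw [hFsucc, hFsucc]
      constructor
      · intro h j hj
        have h1 := Nat.pair_eq_pair.1 h
        rcases Nat.lt_or_ge j (k+1) with hlt | hge
        · exact (ih x y).1 h1.1 j (by omega)
        · have : j = k + 1 := by omega
          rw [this]; exact h1.2
      · intro h
        rw [Nat.pair_eq_pair]
        exact ⟨(ih x y).2 (fun j hj => h j (by omega)), h (k+1) le_rfl⟩
  refine ⟨F, ?_, ?_, ?_, ?_⟩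
  · intro k v
    by_cases hex : ∃ x₀, F k x₀ = v
    · obtain ⟨x₀, rfl⟩ := hex
      have : {x : Ω | F k x = F k x₀} = ⋂ j ∈ Finset.range (k+1), {x | g j x = g j x₀} := by
        ext x
        simp only [Set.mem_setOf_eq, Set.mem_iInter, Finset.mem_range]
        rw [hFeq]
        constructor
        · intro h j hj; exact h j (by omega)
        · intro h j hj; exact h j (by omega)
      rw [this]
      exact Set.Finite.isClopen_biInter (Finset.finite_toSet _) (fun j _ => hg1 j _)
    · have : {x : Ω | F k x = v} = ∅ := by
        ext x; simp only [Set.mem_setOf_eq, Set.mem_empty_iff_false, iff_false]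
        intro h; exact hex ⟨x, h⟩
      rw [this]; exact isClopen_empty
  · intro k
    induction k with
    | zero => exact hg2 0
    | succ k ih =>
      have : Set.range (F (k+1)) ⊆ Set.image2 Nat.pair (Set.range (F k)) (Set.range (g (k+1))) := by
        rintro v ⟨x, rfl⟩
        rw [hFsucc]
        exact Set.mem_image2_of_mem ⟨x, rfl⟩ ⟨x, rfl⟩
      exact Set.Finite.subset (Set.Finite.image2 _ ih (hg2 (k+1))) this
  · intro k x y h
    rw [hFsucc, hFsucc, Nat.pair_eq_pair] at h
    exact h.1
  · intro k x y h
    exact hg3 k x y ((hFeq k x y).1 h k le_rfl)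

end Partitions

section Words
variable {L : ℕ} [NeZero L]

/-- cyclic shift of a word -/
def wshift (u : Fin L → ℕ) : Fin L → ℕ := fun j => u (j + 1)

lemma le_succ_div_mul (a M : ℕ) (hM : 0 < M) : a ≤ (a/M + 1) * M := by
  have h1 : a % M < M := Nat.mod_lt _ hM
  have h2 : M * (a / M) + a % M = a := Nat.div_add_mod a M
  have h3 : (a/M+1)*M = M * (a/M) + M := by ring
  omega

lemma wshift_iterate (u : Fin L → ℕ) (m : ℕ) (j : Fin L) :
    (wshift^[m] u) j = u (j + (m : Fin L)) := by
  induction m generalizing u with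
  | zero => simp
  | succ m ih =>
    rw [Function.iterate_succ_apply]
    rw [ih (wshift u)]
    show u (j + (m:Fin L) + 1) = _
    congr 1
    push_cast
    ring

lemma wshift_L (u : Fin L → ℕ) : wshift^[L] u = u := by
  funext j
  rw [wshift_iterate]
  congr 1
  simp [Fin.natCast_self]

lemma wshift_inj (m : ℕ) : Function.Injective (wshift^[m] : (Fin L → ℕ) → (Fin L → ℕ)) := by
  intro u v h
  funext j
  have hs : ∀ w : Fin L → ℕ, ∀ c : ℕ, wshift^[c*L] w = w := by
    intro w c
    induction c with
    | zero => simp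
    | succ c ih => rw [Nat.succ_mul, Function.iterate_add_apply, wshift_L, ih]
  have hLm : m ≤ (m/L + 1) * L := le_succ_div_mul m L (Nat.pos_of_ne_zero (NeZero.ne L))
  have h2 : ∀ w : Fin L → ℕ, wshift^[(m/L+1)*L - m] (wshift^[m] w) = w := by
    intro w
    rw [← Function.iterate_add_apply, Nat.sub_add_cancel hLm, hs]
  rw [← h2 u, ← h2 v, h]

/-- the set of periods of a word -/
def wper (u : Fin L → ℕ) : Set ℕ := {q | 0 < q ∧ wshift^[q] u = u}

/-- minimal period -/
noncomputable def wq (u : Fin L → ℕ) : ℕ := sInf (wper u)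

lemma wper_L (u : Fin L → ℕ) : L ∈ wper u :=
  ⟨Nat.pos_of_ne_zero (NeZero.ne L), wshift_L u⟩

lemma wq_mem (u : Fin L → ℕ) : wq u ∈ wper u := Nat.sInf_mem ⟨L, wper_L u⟩

lemma wq_pos (u : Fin L → ℕ) : 0 < wq u := (wq_mem u).1

lemma wq_le_L (u : Fin L → ℕ) : wq u ≤ L := Nat.sInf_le (wper_L u)

lemma wq_shift_eq (u : Fin L → ℕ) : wshift^[wq u] u = u := (wq_mem u).2

lemma wshift_mul_q (u : Fin L → ℕ) (c : ℕ) : wshift^[c * wq u] u = u := by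
  induction c with
  | zero => simp
  | succ c ih => rw [Nat.succ_mul, Function.iterate_add_apply, wq_shift_eq, ih]

lemma wq_dvd (u : Fin L → ℕ) (m : ℕ) (hm : wshift^[m] u = u) : wq u ∣ m := by
  have key : wshift^[m % wq u] u = u := by
    have h1 : wshift^[m % wq u + m / wq u * wq u] u = u := by
      rw [Nat.mod_add_div' m (wq u)]
      exact hm
    rwa [Function.iterate_add_apply, wshift_mul_q] at h1
  by_cases h : m % wq u = 0
  · exact Nat.dvd_of_mod_eq_zero h
  · exfalso
    have : wq u ≤ m % wq u := Nat.sInf_le ⟨Nat.pos_of_ne_zero h, key⟩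
    have : m % wq u < wq u := Nat.mod_lt m (wq_pos u)
    omega

lemma wq_wshift (u : Fin L → ℕ) (a : ℕ) : wq (wshift^[a] u) = wq u := by
  have hper : ∀ v : Fin L → ℕ, ∀ b q : ℕ, wshift^[q] v = v → wshift^[q] (wshift^[b] v) = wshift^[b] v := by
    intro v b q hq
    rw [← Function.iterate_add_apply, Nat.add_comm, Function.iterate_add_apply, hq]
  have h1 : wper (wshift^[a] u) = wper u := by
    ext q
    simp only [wper, Set.mem_setOf_eq]
    constructor
    · rintro ⟨hq, h⟩
      refine ⟨hq, ?_⟩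
      apply wshift_inj a
      rw [← Function.iterate_add_apply, Nat.add_comm, Function.iterate_add_apply, h]
    · rintro ⟨hq, h⟩
      exact ⟨hq, hper u a q h⟩
  unfold wq
  rw [h1]

/-- orbit of a word under shifts -/
def worbit (u : Fin L → ℕ) : Set (Fin L → ℕ) := Set.range (fun i : ℕ => wshift^[i] u)

lemma worbit_self (u : Fin L → ℕ) : u ∈ worbit u := ⟨0, rfl⟩

lemma worbit_shift (u : Fin L → ℕ) (a : ℕ) : worbit (wshift^[a] u) = worbit u := by
  have hs : ∀ w : Fin L → ℕ, ∀ c : ℕ, wshift^[c*L] w = w := by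
    intro w c
    induction c with
    | zero => simp
    | succ c ih => rw [Nat.succ_mul, Function.iterate_add_apply, wshift_L, ih]
  ext w
  constructor
  · rintro ⟨i, rfl⟩
    refine ⟨i + a, ?_⟩
    show wshift^[i + a] u = wshift^[i] (wshift^[a] u)
    rw [Function.iterate_add_apply]
  · rintro ⟨i, rfl⟩
    have hle : a ≤ (a/L + 1) * L := le_succ_div_mul a L (Nat.pos_of_ne_zero (NeZero.ne L))
    refine ⟨i + ((a/L+1)*L - a), ?_⟩
    show wshift^[i + ((a/L+1)*L - a)] (wshift^[a] u) = wshift^[i] u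
    rw [Function.iterate_add_apply, ← Function.iterate_add_apply wshift _ a u,
      Nat.sub_add_cancel hle, hs]

noncomputable def wrep' : Set (Fin L → ℕ) → (Fin L → ℕ) := fun s =>
  if h : s.Nonempty then Function.argminOn (fun _ => (0:ℕ)) s h else (fun _ => 0)

/-- canonical representative of the shift-orbit -/
noncomputable def wrep (u : Fin L → ℕ) : Fin L → ℕ := wrep' (worbit u)

lemma wrep_mem (u : Fin L → ℕ) : wrep u ∈ worbit u := by
  unfold wrep wrep'
  rw [dif_pos ⟨u, worbit_self u⟩]
  exact Function.argminOn_mem _ _ _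

lemma wrep_shift (u : Fin L → ℕ) (a : ℕ) : wrep (wshift^[a] u) = wrep u := by
  unfold wrep
  rw [worbit_shift]

lemma wrep_idem (u : Fin L → ℕ) : wrep (wrep u) = wrep u := by
  obtain ⟨a, ha⟩ := wrep_mem u
  replace ha : wshift^[a] u = wrep u := ha
  conv_lhs => rw [← ha]
  rw [wrep_shift]

/-- if shifted reps agree, the reps are equal -/
lemma wrep_orbit_eq {u v : Fin L → ℕ} (i j : ℕ) (h : wshift^[i] u = wshift^[j] v) :
    wrep u = wrep v := by
  have : wrep (wshift^[i] u) = wrep (wshift^[j] v) := by rw [h]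
  rwa [wrep_shift, wrep_shift] at this

end Words

lemma wshift_mul_L {L : ℕ} [NeZero L] (u : Fin L → ℕ) (c : ℕ) : wshift^[c*L] u = u := by
  induction c with
  | zero => simp
  | succ c ih => rw [Nat.succ_mul, Function.iterate_add_apply, wshift_L, ih]

lemma wrep_mem' {L : ℕ} [NeZero L] (u : Fin L → ℕ) : ∃ b, wshift^[b] u = wrep u := by
  obtain ⟨b, hb⟩ := wrep_mem u
  exact ⟨b, hb⟩



section KCastle
variable {Ω : Type*} [MetricSpace Ω] [CompactSpace Ω] [TotallyDisconnectedSpace Ω]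

variable (T : Ω ≃ₜ Ω) (L : ℕ) [NeZero L] (F : ℕ → Ω → ℕ) (k : ℕ)

def kword (z : Ω) : Fin L → ℕ := fun j => F k ((⇑T)^[j.val] z)

def kC (u : Fin L → ℕ) : Set Ω := {x | ∀ j < 2*L, F k ((⇑T)^[j] x) = u (j : Fin L)}

def kK : Set Ω := {z | (⇑T)^[L] z = z}

noncomputable def kE : Set Ω := {z | z ∈ kK T L ∧ (⇑T)^[wq (kword T L F k z)] z ≠ z}

noncomputable def kJ : Set Ω :=
  (⋃ u ∈ (kword T L F k) '' kK T L, ⋃ i ∈ Finset.range L, (⇑T)^[i] '' kC T L F k u) \ kK T L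

section Facts

lemma fin_add_cast_val (j : Fin L) (i : ℕ) : (j + (i : Fin L)).val = (j.val + i) % L := by
  rw [Fin.add_def, Fin.val_natCast]
  conv_rhs => rw [Nat.add_mod]
  simp [Nat.mod_mod_of_dvd]

lemma cast_add_val (j : Fin L) (i : ℕ) : ((j.val + i : ℕ) : Fin L) = j + (i : Fin L) := by
  push_cast
  rfl

lemma kK_closed : IsClosed (kK T L) := isClosed_eq (cont_iter T L) continuous_id

lemma kK_T {z : Ω} (hz : z ∈ kK T L) : T z ∈ kK T L := by
  simp only [kK, Set.mem_setOf_eq] at *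
  rw [← Function.iterate_succ_apply, Function.iterate_succ_apply', hz]

lemma kK_symm {z : Ω} (hz : z ∈ kK T L) : T.symm z ∈ kK T L := by
  simp only [kK, Set.mem_setOf_eq] at *
  have h1 : T ((⇑T)^[L] (T.symm z)) = T (T.symm z) := by
    calc T ((⇑T)^[L] (T.symm z)) = (⇑T)^[L+1] (T.symm z) :=
          (Function.iterate_succ_apply' (⇑T) L (T.symm z)).symm
      _ = (⇑T)^[L] (T (T.symm z)) := Function.iterate_succ_apply (⇑T) L (T.symm z)
      _ = (⇑T)^[L] z := by rw [T.apply_symm_apply]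
      _ = z := hz
      _ = T (T.symm z) := (T.apply_symm_apply z).symm
  exact T.injective h1

lemma kK_iter {z : Ω} (hz : z ∈ kK T L) (i : ℕ) : (⇑T)^[i] z ∈ kK T L := by
  induction i with
  | zero => exact hz
  | succ i ih => rw [Function.iterate_succ_apply']; exact kK_T T L ih

lemma kK_iter_symm {z : Ω} (hz : z ∈ kK T L) (i : ℕ) : (⇑T.symm)^[i] z ∈ kK T L := by
  induction i with
  | zero => exact hz
  | succ i ih => rw [Function.iterate_succ_apply']; exact kK_symm T L ih

lemma kK_mul {z : Ω} (hz : z ∈ kK T L) (c : ℕ) : (⇑T)^[c * L] z = z := by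
  have hz' : (⇑T)^[L] z = z := hz
  induction c with
  | zero => simp
  | succ c ih =>
    rw [Nat.succ_mul, Function.iterate_add_apply, hz', ih]

lemma kK_mod {z : Ω} (hz : z ∈ kK T L) (a : ℕ) : (⇑T)^[a % L] z = (⇑T)^[a] z := by
  conv_rhs => rw [show a = a % L + (a / L) * L from by
    rw [Nat.mod_add_div' a L]]
  rw [Function.iterate_add_apply, kK_mul T L hz]

lemma iter_fix_dvd {z : Ω} {q r : ℕ} (hq : (⇑T)^[q] z = z) (hdvd : q ∣ r) : (⇑T)^[r] z = z := by
  obtain ⟨c, rfl⟩ := hdvd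
  rw [Function.iterate_mul]
  exact Function.iterate_fixed hq c

lemma kC_clopen (hF1 : ∀ k v, IsClopen {x : Ω | F k x = v}) (u : Fin L → ℕ) :
    IsClopen (kC T L F k u) := by
  have : kC T L F k u = ⋂ j ∈ Finset.range (2*L), ((⇑T)^[j]) ⁻¹' {y | F k y = u (j : Fin L)} := by
    ext x
    simp only [kC, Set.mem_setOf_eq, Set.mem_iInter, Finset.mem_range, Set.mem_preimage]
  rw [this]
  exact Set.Finite.isClopen_biInter (Finset.finite_toSet _)
    (fun j _ => (hF1 k _).preimage (cont_iter T j))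

lemma kword_mem_kC {z : Ω} (hz : z ∈ kK T L) : z ∈ kC T L F k (kword T L F k z) := by
  intro j hj
  show F k ((⇑T)^[j] z) = F k ((⇑T)^[((j : Fin L)).val] z)
  rw [Fin.val_natCast, kK_mod T L hz]

lemma kword_shift {z : Ω} (hz : z ∈ kK T L) (a : ℕ) :
    kword T L F k ((⇑T)^[a] z) = wshift^[a] (kword T L F k z) := by
  funext j
  rw [wshift_iterate]
  show F k ((⇑T)^[j.val] ((⇑T)^[a] z)) = F k ((⇑T)^[(j + (a : Fin L)).val] z)
  rw [← Function.iterate_add_apply, fin_add_cast_val, kK_mod T L hz]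

lemma kC_pattern {x : Ω} {u : Fin L → ℕ} (hx : x ∈ kC T L F k u) (j : ℕ) (hj : j < 2*L) :
    F k ((⇑T)^[j] x) = u (j : Fin L) := hx j hj

lemma kC_word_eq {z : Ω} {u : Fin L → ℕ} (hz : z ∈ kK T L) (hzu : z ∈ kC T L F k u) :
    kword T L F k z = u := by
  funext j
  have h1 := hzu j.val (by have := j.isLt; omega)
  rw [Fin.cast_val_eq_self] at h1
  exact h1

lemma kRS_finite (hF2 : ∀ k, (Set.range (F k)).Finite) :
    ((kword T L F k) '' kK T L).Finite := by
  apply Set.Finite.subset (Set.Finite.pi (fun _ : Fin L => hF2 k))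
  rintro w ⟨z, _, rfl⟩
  intro j _
  exact ⟨(⇑T)^[j.val] z, rfl⟩

lemma kC_level_disj {u u' : Fin L → ℕ} (hu : wrep u = u) (hu' : wrep u' = u')
    {i i' : ℕ} (hi : i < wq u) (hi' : i' < wq u') (hne : ¬(u = u' ∧ i = i')) :
    Disjoint ((⇑T)^[i] '' kC T L F k u) ((⇑T)^[i'] '' kC T L F k u') := by
  rw [Set.disjoint_left]
  rintro x ⟨y, hy, rfl⟩ ⟨y', hy', hyx⟩
  -- common pattern forces shifted words to coincide
  have hshift : wshift^[i] u = wshift^[i'] u' := by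
    funext j
    rw [wshift_iterate, wshift_iterate]
    have e1 : u (j + (i : Fin L)) = F k ((⇑T)^[j.val] ((⇑T)^[i] y)) := by
      rw [← Function.iterate_add_apply]
      have := kC_pattern T L F k hy (j.val + i) (by
        have h1 := j.isLt
        have h2 := wq_le_L u
        omega)
      rw [cast_add_val] at this
      exact this.symm
    have e2 : u' (j + (i' : Fin L)) = F k ((⇑T)^[j.val] ((⇑T)^[i'] y')) := by
      rw [← Function.iterate_add_apply]
      have := kC_pattern T L F k hy' (j.val + i') (by
        have h1 := j.isLt
        have h2 := wq_le_L u'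
        omega)
      rw [cast_add_val] at this
      exact this.symm
    rw [e1, e2, hyx]
  have huu' : u = u' := by
    have := wrep_orbit_eq i i' hshift
    rw [hu, hu'] at this
    exact this
  subst huu'
  have hii' : i = i' := by
    rcases Nat.lt_trichotomy i i' with hlt | heq | hgt
    · exfalso
      have key : wshift^[i' - i] u = u := by
        apply wshift_inj i
        rw [← Function.iterate_add_apply, show i + (i' - i) = i' from by omega]
        exact hshift.symm
      have := wq_dvd u (i' - i) key
      have hpos : 0 < i' - i := by omega
      have := Nat.le_of_dvd hpos this
      omega
    · exact heq
    · exfalso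
      have key : wshift^[i - i'] u = u := by
        apply wshift_inj i'
        rw [← Function.iterate_add_apply, show i' + (i - i') = i from by omega]
        exact hshift
      have := wq_dvd u (i - i') key
      have hpos : 0 < i - i' := by omega
      have := Nat.le_of_dvd hpos this
      omega
  exact hne ⟨rfl, hii'⟩

lemma kC_cover {z : Ω} (hz : z ∈ kK T L) :
    ∃ i < wq (wrep (kword T L F k z)),
      z ∈ (⇑T)^[i] '' kC T L F k (wrep (kword T L F k z)) := by
  set w := kword T L F k z with hw
  set u := wrep w with hu
  obtain ⟨b, hb⟩ := wrep_mem' w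
  have hbL : b ≤ (b/L + 1) * L := by
    have h1 : b % L < L := Nat.mod_lt _ (Nat.pos_of_ne_zero (NeZero.ne L))
    have h2 : L * (b / L) + b % L = b := Nat.div_add_mod b L
    have h3 : (b/L+1)*L = L * (b/L) + L := by ring
    omega
  set a := (b/L + 1) * L - b with ha
  have hau : wshift^[a] u = w := by
    rw [hu, ← hb, ← Function.iterate_add_apply, ha, Nat.sub_add_cancel hbL, wshift_mul_L]
  set a' := a % wq u with ha'
  have ha'q : a' < wq u := Nat.mod_lt _ (wq_pos u)
  have ha'u : wshift^[a'] u = w := by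
    have : wshift^[a' + (a / wq u) * wq u] u = w := by
      rw [Nat.mod_add_div' a (wq u)]
      exact hau
    rwa [Function.iterate_add_apply, wshift_mul_q] at this
  set y := (⇑T.symm)^[a'] z with hy
  have hyK : y ∈ kK T L := kK_iter_symm T L hz a'
  have hzy : z = (⇑T)^[a'] y := by rw [hy, st_cancel]
  have hwy : kword T L F k y = u := by
    apply wshift_inj a'
    rw [ha'u, ← kword_shift T L F k hyK a', ← hzy]
  refine ⟨a', ha'q, y, ?_, hzy.symm⟩
  rw [← hwy]
  exact kword_mem_kC T L F k hyK

lemma kberr_sub {u : Fin L → ℕ} (hreal : u ∈ (kword T L F k) '' kK T L)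
    {z : Ω} (hzC : z ∈ kC T L F k u) (hzq : (⇑T)^[wq u] z ≠ z) :
    z ∈ kE T L F k ∪ kJ T L F k := by
  by_cases hzK : z ∈ kK T L
  · left
    refine ⟨hzK, ?_⟩
    rw [kC_word_eq T L F k hzK hzC]
    exact hzq
  · right
    refine ⟨?_, hzK⟩
    refine Set.mem_biUnion hreal ?_
    refine Set.mem_biUnion (Finset.mem_range.2 (Nat.pos_of_ne_zero (NeZero.ne L))) ?_
    simpa using hzC

lemma kV_sub {u : Fin L → ℕ} (hreal : u ∈ (kword T L F k) '' kK T L)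
    {i : ℕ} (hi : i < L) {x : Ω} (hx : x ∈ (⇑T)^[i] '' kC T L F k u) (hxK : x ∉ kK T L) :
    x ∈ kJ T L F k := by
  refine ⟨?_, hxK⟩
  exact Set.mem_biUnion hreal (Set.mem_biUnion (Finset.mem_range.2 hi) hx)

lemma kreal_wrep {u : Fin L → ℕ} (hreal : u ∈ (kword T L F k) '' kK T L) :
    wrep u ∈ (kword T L F k) '' kK T L := by
  obtain ⟨z, hz, rfl⟩ := hreal
  obtain ⟨b, hb⟩ := wrep_mem' (kword T L F k z)
  exact ⟨(⇑T)^[b] z, kK_iter T L hz b, by rw [kword_shift T L F k hz b, hb]⟩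

lemma kq_dvd_succ (hF3 : ∀ k (x y : Ω), F (k+1) x = F (k+1) y → F k x = F k y) (z : Ω) :
    wq (kword T L F k z) ∣ wq (kword T L F (k+1) z) := by
  apply wq_dvd
  funext j
  rw [wshift_iterate]
  have h1 := congrFun (wq_shift_eq (kword T L F (k+1) z)) j
  rw [wshift_iterate] at h1
  exact hF3 k _ _ h1

lemma kq_dvd_period {z : Ω} (hz : z ∈ kK T L) {r : ℕ} (hr : (⇑T)^[r] z = z) :
    wq (kword T L F k z) ∣ r := by
  apply wq_dvd
  rw [← kword_shift T L F k hz r, hr]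

lemma kE_antitone (hF3 : ∀ k (x y : Ω), F (k+1) x = F (k+1) y → F k x = F k y) :
    kE T L F (k+1) ⊆ kE T L F k := by
  rintro z ⟨hzK, hne⟩
  refine ⟨hzK, ?_⟩
  intro heq
  exact hne (iter_fix_dvd T heq (kq_dvd_succ T L F k hF3 z))

lemma kC_antitone (hF3 : ∀ k (x y : Ω), F (k+1) x = F (k+1) y → F k x = F k y)
    {z₀ : Ω} (hz₀ : z₀ ∈ kK T L) :
    kC T L F (k+1) (kword T L F (k+1) z₀) ⊆ kC T L F k (kword T L F k z₀) := by
  intro y hy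
  intro j hj
  have h1 := hy j hj
  have h2 : kword T L F (k+1) z₀ ((j : Fin L)) = F (k+1) ((⇑T)^[j] z₀) := by
    show F (k+1) ((⇑T)^[((j : Fin L)).val] z₀) = _
    rw [Fin.val_natCast, kK_mod T L hz₀]
  rw [h2] at h1
  have h3 : F k ((⇑T)^[j] y) = F k ((⇑T)^[j] z₀) := hF3 k _ _ h1
  rw [h3]
  show F k ((⇑T)^[j] z₀) = F k ((⇑T)^[((j : Fin L)).val] z₀)
  rw [Fin.val_natCast, kK_mod T L hz₀]

lemma kJ_antitone (hF3 : ∀ k (x y : Ω), F (k+1) x = F (k+1) y → F k x = F k y) :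
    kJ T L F (k+1) ⊆ kJ T L F k := by
  rintro x ⟨hmem, hxK⟩
  refine ⟨?_, hxK⟩
  simp only [Set.mem_iUnion] at hmem ⊢
  obtain ⟨u, ⟨z₀, hz₀, rfl⟩, i, hi, y, hy, rfl⟩ := hmem
  exact ⟨kword T L F k z₀, ⟨z₀, hz₀, rfl⟩, i, hi, y, kC_antitone T L F k hF3 hz₀ hy, rfl⟩

lemma kEJ_iInter_empty (hF4 : ∀ k (x y : Ω), F k x = F k y → dist x y ≤ 1/(k+1)) :
    ⋂ k, (kE T L F k ∪ kJ T L F k) = ∅ := by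
  have hL : 0 < L := Nat.pos_of_ne_zero (NeZero.ne L)
  ext x
  simp only [Set.mem_iInter, Set.mem_empty_iff_false, iff_false, not_forall]
  by_cases hxK : x ∈ kK T L
  · -- x periodic; eventually aligned, not in E; never in J
    set R := {p | 0 < p ∧ (⇑T)^[p] x = x} with hR
    have hRne : R.Nonempty := ⟨L, hL, hxK⟩
    set rz := sInf R with hrz
    have hrzR : rz ∈ R := Nat.sInf_mem hRne
    have hrzL : rz ≤ L := Nat.sInf_le ⟨hL, hxK⟩
    have notJ : ∀ k, x ∉ kJ T L F k := by
      intro k ⟨_, h2⟩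
      exact h2 hxK
    have notE : ∀ k, wq (kword T L F k x) = rz → x ∉ kE T L F k := by
      intro k hq ⟨_, hne⟩
      rw [hq] at hne
      exact hne hrzR.2
    by_cases hrz1 : rz = 1
    · refine ⟨0, ?_⟩
      intro hmem
      rcases hmem with hE | hJ
      · have hdvd := kq_dvd_period T L F 0 hxK hrzR.2
        have h1 : wq (kword T L F 0 x) = rz := by
          have := wq_pos (kword T L F 0 x)
          have := Nat.le_of_dvd hrzR.1 hdvd
          omega
        exact notE 0 h1 hE
      · exact notJ 0 hJ
    · have hrz2 : 2 ≤ rz := by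
        have := hrzR.1; omega
      have hne' : (Finset.Ico 1 rz).Nonempty := by
        rw [Finset.nonempty_Ico]; omega
      set δ := (Finset.Ico 1 rz).inf' hne' (fun q => dist ((⇑T)^[q] x) x) with hδ
      have hδpos : 0 < δ := by
        rw [hδ, Finset.lt_inf'_iff]
        intro q hq
        rw [Finset.mem_Ico] at hq
        rw [dist_pos]
        intro heq
        have : q ∉ R := Nat.notMem_of_lt_sInf (by omega)
        exact this ⟨by omega, heq⟩
      obtain ⟨kk, hkk⟩ := exists_nat_one_div_lt hδpos
      refine ⟨kk, ?_⟩
      intro hmem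
      rcases hmem with hE | hJ
      · set q := wq (kword T L F kk x) with hq
        have hdvd : q ∣ rz := kq_dvd_period T L F kk hxK hrzR.2
        have hqrz : q ≠ rz := by
          intro heq
          have h5 : (⇑T)^[rz] x = x := hrzR.2
          rw [← heq, hq] at h5
          exact hE.2 h5
        have hqlt : q < rz := by
          have := Nat.le_of_dvd hrzR.1 hdvd
          omega
        have hq1 : 1 ≤ q := wq_pos _
        -- mesh bound
        have hmesh : dist ((⇑T)^[q] x) x ≤ 1/(kk+1) := by
          have h1 := congrFun (wq_shift_eq (kword T L F kk x)) 0
          rw [wshift_iterate] at h1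
          have h2 : ((0 : Fin L) + (q : Fin L)).val = q := by
            rw [zero_add, Fin.val_natCast, Nat.mod_eq_of_lt (by omega)]
          have h3 : kword T L F kk x ((0 : Fin L) + (q : Fin L)) = F kk ((⇑T)^[q] x) := by
            show F kk ((⇑T)^[((0 : Fin L) + (q : Fin L)).val] x) = _
            rw [h2]
          have h4 : kword T L F kk x 0 = F kk x := by
            show F kk ((⇑T)^[(0 : Fin L).val] x) = _
            simp
          rw [h3, h4] at h1
          exact hF4 kk _ _ h1
        have hdist : δ ≤ dist ((⇑T)^[q] x) x :=
          Finset.inf'_le _ (Finset.mem_Ico.2 ⟨hq1, hqlt⟩)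
        have : (1:ℝ)/(kk+1) < δ := hkk
        linarith
      · exact notJ kk hJ
  · -- x not periodic: never in E, eventually not in J
    have notE : ∀ k, x ∉ kE T L F k := by
      intro k ⟨h1, _⟩
      exact hxK h1
    have hne' : (Finset.range L).Nonempty := ⟨0, Finset.mem_range.2 hL⟩
    set δ := (Finset.range L).inf' hne'
      (fun i => dist ((⇑T)^[L] ((⇑T.symm)^[i] x)) ((⇑T.symm)^[i] x)) with hδ
    have hδpos : 0 < δ := by
      rw [hδ, Finset.lt_inf'_iff]
      intro i hi
      rw [dist_pos]
      intro heq
      apply hxK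
      have hyK : (⇑T.symm)^[i] x ∈ kK T L := heq
      have := kK_iter T L hyK i
      rw [st_cancel] at this
      exact this
    obtain ⟨kk, hkk⟩ := exists_nat_one_div_lt (by linarith : (0:ℝ) < δ/2)
    refine ⟨kk, ?_⟩
    intro hmem
    rcases hmem with hE | hJ
    · exact notE kk hE
    · obtain ⟨hmem', _⟩ := hJ
      simp only [Set.mem_iUnion] at hmem'
      obtain ⟨u, ⟨z₀, hz₀, rfl⟩, i, hi, y, hyC, hyx⟩ := hmem'
      rw [Finset.mem_range] at hi
      have hyy : y = (⇑T.symm)^[i] x := by rw [← hyx, ts_cancel]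
      have e0 : F kk y = F kk z₀ := by
        have h1 := hyC 0 (by omega)
        have h2 : kword T L F kk z₀ ((0:ℕ) : Fin L) = F kk z₀ := by
          show F kk ((⇑T)^[(((0:ℕ) : Fin L)).val] z₀) = _
          simp
        rw [h2] at h1
        simpa using h1
      have eL : F kk ((⇑T)^[L] y) = F kk z₀ := by
        have h1 := hyC L (by omega)
        have h2 : kword T L F kk z₀ ((L:ℕ) : Fin L) = F kk z₀ := by
          show F kk ((⇑T)^[(((L:ℕ) : Fin L)).val] z₀) = _
          rw [Fin.natCast_self]
          simp
        rw [h2] at h1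
        exact h1
      have d1 : dist ((⇑T)^[L] y) z₀ ≤ 1/(kk+1) := hF4 kk _ _ eL
      have d2 : dist y z₀ ≤ 1/(kk+1) := hF4 kk _ _ e0
      have d3 : dist ((⇑T)^[L] y) y ≤ 2/(kk+1) := by
        calc dist ((⇑T)^[L] y) y ≤ dist ((⇑T)^[L] y) z₀ + dist z₀ y := dist_triangle _ _ _
          _ ≤ 1/(kk+1) + 1/(kk+1) := by rw [dist_comm z₀ y]; exact add_le_add d1 d2
          _ = 2/(kk+1) := by ring
      have hdle : δ ≤ dist ((⇑T)^[L] y) y := by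
        rw [hyy]
        exact Finset.inf'_le _ (Finset.mem_range.2 hi)
      have : (1:ℝ)/(kk+1) < δ/2 := hkk
      have h6 : 2/((kk:ℝ)+1) = 2*(1/((kk:ℝ)+1)) := by ring
      linarith

end Facts

section Meas
variable [MeasurableSpace Ω] [BorelSpace Ω]

lemma kword_fiber_eq (u : Fin L → ℕ) :
    {z : Ω | kword T L F k z = u} = ⋂ j : Fin L, ((⇑T)^[j.val]) ⁻¹' {y | F k y = u j} := by
  ext z
  simp only [Set.mem_setOf_eq, Set.mem_iInter, Set.mem_preimage, funext_iff]
  rfl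

lemma kE_measurable (hF1 : ∀ k v, IsClopen {x : Ω | F k x = v})
    (hF2 : ∀ k, (Set.range (F k)).Finite) :
    MeasurableSet (kE T L F k) := by
  have hfin := kRS_finite T L F k hF2
  have heq : kE T L F k = ⋃ u ∈ hfin.toFinset,
      ((kK T L ∩ {z | kword T L F k z = u}) ∩ {z | (⇑T)^[wq u] z ≠ z}) := by
    ext z
    simp only [Set.mem_iUnion, Set.Finite.mem_toFinset, exists_prop]
    constructor
    · rintro ⟨hzK, hne⟩
      exact ⟨kword T L F k z, ⟨z, hzK, rfl⟩, ⟨⟨hzK, rfl⟩, hne⟩⟩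
    · rintro ⟨u, _, ⟨⟨hzK, hzw⟩, hne⟩⟩
      refine ⟨hzK, ?_⟩
      rw [Set.mem_setOf_eq] at hzw
      rw [hzw]
      exact hne
  rw [heq]
  refine Set.Finite.measurableSet_biUnion (Finset.finite_toSet _) (fun u _ => ?_)
  refine MeasurableSet.inter (MeasurableSet.inter ?_ ?_) ?_
  · exact (kK_closed T L).measurableSet
  · rw [kword_fiber_eq]
    exact MeasurableSet.iInter (fun j => ((hF1 k (u j)).preimage (cont_iter T j.val)).isOpen.measurableSet)
  · have : {z : Ω | (⇑T)^[wq u] z ≠ z} = {z : Ω | (⇑T)^[wq u] z = z}ᶜ := rfl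
    rw [this]
    exact (isClosed_eq (cont_iter T _) continuous_id).measurableSet.compl

lemma kJ_measurable (hF1 : ∀ k v, IsClopen {x : Ω | F k x = v})
    (hF2 : ∀ k, (Set.range (F k)).Finite) :
    MeasurableSet (kJ T L F k) := by
  have hfin := kRS_finite T L F k hF2
  have heq : (⋃ u ∈ (kword T L F k) '' kK T L, ⋃ i ∈ Finset.range L, (⇑T)^[i] '' kC T L F k u)
      = ⋃ u ∈ hfin.toFinset, ⋃ i ∈ Finset.range L, (⇑T)^[i] '' kC T L F k u := by
    ext x
    simp only [Set.mem_iUnion, Set.Finite.mem_toFinset, exists_prop]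
  unfold kJ
  rw [heq]
  refine MeasurableSet.diff ?_ (kK_closed T L).measurableSet
  refine Set.Finite.measurableSet_biUnion (Finset.finite_toSet _) (fun u _ => ?_)
  refine Set.Finite.measurableSet_biUnion (Finset.finite_toSet _) (fun i _ => ?_)
  exact (isClopen_image_iter T (kC_clopen T L F k hF1 u) i).isOpen.measurableSet

end Meas
end KCastle

section KCastleMain
variable {Ω : Type*} [MetricSpace Ω] [CompactSpace Ω] [TotallyDisconnectedSpace Ω]
variable [MeasurableSpace Ω] [BorelSpace Ω]


theorem exists_K_castle (T : Ω ≃ₜ Ω) (L : ℕ) (hL : 1 ≤ L) (ν : Measure Ω) [IsFiniteMeasure ν]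
    (ε' : ℝ≥0∞) (hε' : 0 < ε') :
    ∃ (bs : Finset (Set Ω × ℕ)) (Bad : Set Ω),
      (∀ p ∈ bs, IsClopen p.1) ∧ (∀ p ∈ bs, 1 ≤ p.2) ∧ (∀ p ∈ bs, p.2 ≤ L) ∧
      (∀ p ∈ bs, ∀ q ∈ bs, ∀ i j : ℕ, i < p.2 → j < q.2 → ¬(p = q ∧ i = j) →
        Disjoint ((⇑T)^[i] '' p.1) ((⇑T)^[j] '' q.1)) ∧
      (∀ z : Ω, (⇑T)^[L] z = z → ∃ p ∈ bs, ∃ i, i < p.2 ∧ z ∈ (⇑T)^[i] '' p.1) ∧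
      MeasurableSet Bad ∧ ν Bad < ε' ∧
      (∀ p ∈ bs, ∀ z, z ∈ p.1 → (⇑T)^[p.2] z ≠ z → z ∈ Bad) ∧
      (∀ p ∈ bs, ∀ i, i < p.2 → ∀ x, x ∈ (⇑T)^[i] '' p.1 → (⇑T)^[L] x ≠ x → x ∈ Bad) := by
  classical
  haveI : NeZero L := ⟨by omega⟩
  obtain ⟨F, hF1, hF2, hF3, hF4⟩ := exists_mesh_seq (Ω := Ω)
  set s : ℕ → Set Ω := fun k => kE T L F k ∪ kJ T L F k with hs
  have hanti : Antitone s := by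
    apply antitone_nat_of_succ_le
    intro k
    exact Set.union_subset_union (kE_antitone T L F k hF3) (kJ_antitone T L F k hF3)
  have hmeas : ∀ k, MeasurableSet (s k) := fun k =>
    (kE_measurable T L F k hF1 hF2).union (kJ_measurable T L F k hF1 hF2)
  have htend := MeasureTheory.tendsto_measure_iInter_atTop (μ := ν)
    (fun k => (hmeas k).nullMeasurableSet) hanti ⟨0, measure_ne_top ν _⟩
  have hiInter : ⋂ k, s k = ∅ := kEJ_iInter_empty T L F hF4
  rw [hiInter, measure_empty] at htend
  obtain ⟨k, hk⟩ := (htend.eventually_lt_const hε').exists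
  have hfin := kRS_finite T L F k hF2
  set bs : Finset (Set Ω × ℕ) :=
    Finset.image (fun u => (kC T L F k (wrep u), wq (wrep u))) hfin.toFinset with hbs
  refine ⟨bs, s k, ?_, ?_, ?_, ?_, ?_, hmeas k, hk, ?_, ?_⟩
  · rintro p hp
    obtain ⟨u₀, _, rfl⟩ := Finset.mem_image.1 hp
    exact kC_clopen T L F k hF1 _
  · rintro p hp
    obtain ⟨u₀, _, rfl⟩ := Finset.mem_image.1 hp
    exact wq_pos _
  · rintro p hp
    obtain ⟨u₀, _, rfl⟩ := Finset.mem_image.1 hp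
    exact wq_le_L _
  · rintro p hp q hq i j hi hj hne
    obtain ⟨u₀, _, rfl⟩ := Finset.mem_image.1 hp
    obtain ⟨u₀', _, rfl⟩ := Finset.mem_image.1 hq
    exact kC_level_disj T L F k (wrep_idem u₀) (wrep_idem u₀') hi hj
      (by
        intro ⟨h1, h2⟩
        exact hne ⟨by rw [h1], h2⟩)
  · intro z hz
    obtain ⟨i, hi, hmem⟩ := kC_cover T L F k hz
    refine ⟨(kC T L F k (wrep (kword T L F k z)), wq (wrep (kword T L F k z))), ?_, i, hi, hmem⟩
    rw [hbs]
    exact Finset.mem_image.2 ⟨kword T L F k z, hfin.mem_toFinset.2 ⟨z, hz, rfl⟩, rfl⟩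
  · rintro p hp z hz hzq
    obtain ⟨u₀, hu₀, rfl⟩ := Finset.mem_image.1 hp
    exact kberr_sub T L F k (kreal_wrep T L F k (hfin.mem_toFinset.1 hu₀)) hz hzq
  · rintro p hp i hi x hx hxK
    obtain ⟨u₀, hu₀, rfl⟩ := Finset.mem_image.1 hp
    right
    exact kV_sub T L F k (kreal_wrep T L F k (hfin.mem_toFinset.1 hu₀))
      (lt_of_lt_of_le hi (wq_le_L _)) hx hxK

end KCastleMain



section Marker
variable {Ω : Type*} [TopologicalSpace Ω] [CompactSpace Ω] [T2Space Ω]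
  [TotallyDisconnectedSpace Ω]

lemma exists_disjoint_clopen_nbhds (n : ℕ) (p : ℕ → Ω)
    (hdist : ∀ i j, i < j → j < n → p i ≠ p j) :
    ∃ U : ℕ → Set Ω, (∀ i, i < n → IsClopen (U i)) ∧ (∀ i, i < n → p i ∈ U i) ∧
      (∀ i j, i < j → j < n → Disjoint (U i) (U j)) := by
  classical
  haveI : TotallySeparatedSpace Ω := loc_compact_t2_tot_disc_iff_tot_sep.1 inferInstance
  have hW : ∀ i j : ℕ, ∃ W : Set Ω, (i < j → j < n → (IsClopen W ∧ p i ∈ W ∧ p j ∉ W)) := by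
    intro i j
    by_cases h : i < j ∧ j < n
    · obtain ⟨W, hW1, hW2, hW3⟩ := exists_isClopen_of_totally_separated (hdist i j h.1 h.2)
      exact ⟨W, fun _ _ => ⟨hW1, hW2, hW3⟩⟩
    · exact ⟨∅, fun h1 h2 => absurd ⟨h1, h2⟩ h⟩
  choose W hWspec using hW
  refine ⟨fun i => (⋂ j ∈ Finset.Ico (i+1) n, W i j) ∩ ⋂ j ∈ Finset.range i, (W j i)ᶜ,
    ?_, ?_, ?_⟩
  · intro i hi
    refine IsClopen.inter ?_ ?_
    · refine Set.Finite.isClopen_biInter (Finset.finite_toSet _) (fun j hj => ?_)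
      rw [Finset.mem_coe, Finset.mem_Ico] at hj
      exact (hWspec i j (by omega) hj.2).1
    · refine Set.Finite.isClopen_biInter (Finset.finite_toSet _) (fun j hj => ?_)
      rw [Finset.mem_coe, Finset.mem_range] at hj
      exact (hWspec j i hj hi).1.compl
  · intro i hi
    constructor
    · refine Set.mem_iInter₂.2 (fun j hj => ?_)
      rw [Finset.mem_Ico] at hj
      exact (hWspec i j (by omega) hj.2).2.1
    · refine Set.mem_iInter₂.2 (fun j hj => ?_)
      rw [Finset.mem_range] at hj
      exact (hWspec j i hj hi).2.2
  · intro i j hij hjn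
    rw [Set.disjoint_left]
    intro x hxi hxj
    have h1 : x ∈ W i j := by
      have := hxi.1
      rw [Set.mem_iInter₂] at this
      exact this j (Finset.mem_Ico.2 ⟨by omega, hjn⟩)
    have h2 : x ∉ W i j := by
      have := hxj.2
      rw [Set.mem_iInter₂] at this
      exact this i (Finset.mem_range.2 hij)
    exact h2 h1

variable (T : Ω ≃ₜ Ω) (n : ℕ)

def mSh (D : Set Ω) : Set Ω := ⋃ i ∈ Finset.range n, ((⇑T)^[i] '' D ∪ (⇑T)^[i] ⁻¹' D)

def mS (C : Ω → Set Ω) : List Ω → Set Ω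
  | [] => ∅
  | x :: l => mS C l ∪ (C x \ mSh T n (mS C l))

lemma mSh_clopen {D : Set Ω} (hD : IsClopen D) : IsClopen (mSh T n D) := by
  refine Set.Finite.isClopen_biUnion (Finset.finite_toSet _) (fun i _ => ?_)
  exact (isClopen_image_iter T hD i).union (hD.preimage (cont_iter T i))

lemma mSh_mono {D D' : Set Ω} (h : D ⊆ D') : mSh T n D ⊆ mSh T n D' := by
  refine Set.iUnion₂_mono (fun i _ => ?_)
  exact Set.union_subset_union (Set.image_mono h) (Set.preimage_mono h)

lemma mS_clopen (C : Ω → Set Ω) (hC : ∀ x, IsClopen (C x)) (l : List Ω) :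
    IsClopen (mS T n C l) := by
  induction l with
  | nil => exact isClopen_empty
  | cons x l ih => exact ih.union ((hC x).diff (mSh_clopen T n ih))

lemma mS_subset (C : Ω → Set Ω) {A : Set Ω} (hC : ∀ x, C x ⊆ A) (l : List Ω) :
    mS T n C l ⊆ A := by
  induction l with
  | nil => exact Set.empty_subset A
  | cons x l ih =>
    refine Set.union_subset ih ?_
    exact fun y hy => hC x hy.1

lemma mS_mono_cons (C : Ω → Set Ω) (x : Ω) (l : List Ω) :
    mS T n C l ⊆ mS T n C (x :: l) := Set.subset_union_left

lemma mS_sep (C : Ω → Set Ω)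
    (hlev : ∀ x, ∀ i j, i < j → j < n → Disjoint ((⇑T)^[i] '' C x) ((⇑T)^[j] '' C x))
    (l : List Ω) :
    ∀ y ∈ mS T n C l, ∀ i, 0 < i → i < n → (⇑T)^[i] y ∉ mS T n C l := by
  induction l with
  | nil => intro y hy; exact absurd hy (Set.notMem_empty y)
  | cons x l ih =>
    intro y hy i hi0 hin hTy
    rcases hy with hyS | ⟨hyC, hyU⟩ <;> rcases hTy with hTyS | ⟨hTyC, hTyU⟩
    · exact ih y hyS i hi0 hin hTyS
    · -- y old, T^i y new: T^i y ∈ image of old S, so in mSh old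
      apply hTyU
      refine Set.mem_biUnion (Finset.mem_range.2 hin) ?_
      exact Or.inl ⟨y, hyS, rfl⟩
    · -- y new, T^i y old: y ∈ preimage of old S
      apply hyU
      refine Set.mem_biUnion (Finset.mem_range.2 hin) ?_
      exact Or.inr hTyS
    · -- both in C x: contradicts level disjointness at (0, i)
      have hdisj := hlev x 0 i hi0 hin
      rw [Set.disjoint_left] at hdisj
      apply hdisj (a := (⇑T)^[i] y)
      · simpa using hTyC
      · exact ⟨y, hyC, rfl⟩

lemma mS_cover (C : Ω → Set Ω) (l : List Ω) :
    ∀ x ∈ l, C x ⊆ mS T n C l ∪ mSh T n (mS T n C l) := by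
  induction l with
  | nil => intro x hx; simp at hx
  | cons z l ih =>
    intro x hx y hy
    rcases List.mem_cons.1 hx with rfl | hxl
    · by_cases hyU : y ∈ mSh T n (mS T n C l)
      · right
        exact mSh_mono T n (mS_mono_cons T n C x l) hyU
      · left
        exact Or.inr ⟨hy, hyU⟩
    · rcases ih x hxl hy with h | h
      · left; exact mS_mono_cons T n C z l h
      · right; exact mSh_mono T n (mS_mono_cons T n C z l) h

theorem marker_lemma (A : Set Ω) (hA : IsClopen A) (hn : 1 ≤ n)
    (hdist : ∀ x ∈ A, ∀ i j : ℕ, i < j → j < n → (⇑T)^[i] x ≠ (⇑T)^[j] x) :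
    ∃ S : Set Ω, IsClopen S ∧ S ⊆ A ∧
      (∀ x ∈ S, ∀ i, 0 < i → i < n → (⇑T)^[i] x ∉ S) ∧
      (∀ x ∈ A, ∃ i, i < n ∧ ((⇑T)^[i] x ∈ S ∨ (⇑T.symm)^[i] x ∈ S)) := by
  classical
  have hCart : ∀ x : Ω, ∃ Cx : Set Ω, IsClopen Cx ∧ Cx ⊆ A ∧ (x ∈ A → x ∈ Cx) ∧
      (∀ i j, i < j → j < n → Disjoint ((⇑T)^[i] '' Cx) ((⇑T)^[j] '' Cx)) := by
    intro x
    by_cases hxA : x ∈ A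
    · obtain ⟨U, hU1, hU2, hU3⟩ := exists_disjoint_clopen_nbhds n (fun i => (⇑T)^[i] x)
        (fun i j hij hjn => hdist x hxA i j hij hjn)
      refine ⟨A ∩ ⋂ i ∈ Finset.range n, ((⇑T)^[i]) ⁻¹' U i, ?_, Set.inter_subset_left, ?_, ?_⟩
      · refine hA.inter ?_
        refine Set.Finite.isClopen_biInter (Finset.finite_toSet _) (fun i hi => ?_)
        rw [Finset.mem_coe, Finset.mem_range] at hi
        exact (hU1 i hi).preimage (cont_iter T i)
      · intro _
        refine ⟨hxA, ?_⟩
        refine Set.mem_iInter₂.2 (fun i hi => ?_)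
        rw [Finset.mem_range] at hi
        exact hU2 i hi
      · intro i j hij hjn
        rw [Set.disjoint_left]
        rintro w ⟨y, hy, rfl⟩ ⟨y', hy', hyy'⟩
        have h1 : (⇑T)^[i] y ∈ U i := by
          have := hy.2
          rw [Set.mem_iInter₂] at this
          exact this i (Finset.mem_range.2 (by omega))
        have h2 : (⇑T)^[j] y' ∈ U j := by
          have := hy'.2
          rw [Set.mem_iInter₂] at this
          exact this j (Finset.mem_range.2 hjn)
        rw [hyy'] at h2
        exact Set.disjoint_left.1 (hU3 i j hij hjn) h1 h2
    · exact ⟨∅, isClopen_empty, Set.empty_subset A, fun h => absurd h hxA, by simp⟩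
  choose Cf hCf1 hCf2 hCf3 hCf4 using hCart
  obtain ⟨t, ht⟩ := IsCompact.elim_finite_subcover (hA.isClosed.isCompact) Cf
    (fun x => (hCf1 x).2) (fun x hx => Set.mem_iUnion.2 ⟨x, hCf3 x hx⟩)
  set S := mS T n Cf t.toList with hS
  refine ⟨S, mS_clopen T n Cf hCf1 _, mS_subset T n Cf hCf2 _, mS_sep T n Cf hCf4 _, ?_⟩
  intro x hxA
  have hx : x ∈ ⋃ c ∈ t, Cf c := ht hxA
  rw [Set.mem_iUnion₂] at hx
  obtain ⟨c, hc, hxc⟩ := hx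
  have := mS_cover T n Cf t.toList c (Finset.mem_toList.2 hc) hxc
  rcases this with h | h
  · exact ⟨0, by omega, Or.inl (by simpa using h)⟩
  · rw [mSh, Set.mem_iUnion₂] at h
    obtain ⟨i, hi, hmem⟩ := h
    rw [Finset.mem_range] at hi
    rcases hmem with h1 | h2
    · rw [image_iter T] at h1
      exact ⟨i, hi, Or.inr h1⟩
    · exact ⟨i, hi, Or.inl h2⟩

end Marker



lemma sInf_eq_of_mem_of_min {St : Set ℕ} {i : ℕ} (hi : i ∈ St) (h : ∀ j < i, j ∉ St) :
    sInf St = i := by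
  have h1 : sInf St ≤ i := Nat.sInf_le hi
  rcases Nat.lt_or_ge (sInf St) i with hlt | hge
  · exact absurd (Nat.sInf_mem ⟨i, hi⟩) (h _ hlt)
  · omega

section Towers
variable {Ω : Type*} [TopologicalSpace Ω] [CompactSpace Ω] [T2Space Ω]
variable (T : Ω ≃ₜ Ω) (V S : Set Ω) (n : ℕ)

def tCb (j : ℕ) : Set Ω := ((⇑T.symm)^[j]) ⁻¹' S ∪ ((⇑T.symm)^[j+1]) ⁻¹' V

def tCf (j : ℕ) : Set Ω := ((⇑T)^[j]) ⁻¹' (S ∪ V)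

noncomputable def tb (x : Ω) : ℕ := sInf {j | x ∈ tCb T V S j}

noncomputable def tf (x : Ω) : ℕ := sInf {j | 1 ≤ j ∧ x ∈ tCf T V S j}

def tBl (ℓ : ℕ) : Set Ω :=
  Vᶜ ∩ tCb T V S 0 ∩ (tCf T V S ℓ ∩ ⋂ j ∈ Finset.Ico 1 ℓ, (tCf T V S j)ᶜ)


lemma tf_min : ∀ (x : Ω) (j : ℕ), 1 ≤ j → j < tf T V S x → x ∉ tCf T V S j := by
  intro x j h1 hj hc
  exact Nat.notMem_of_lt_sInf hj ⟨h1, hc⟩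

lemma tb_min : ∀ (x : Ω) (j : ℕ), j < tb T V S x → x ∉ tCb T V S j := by
  intro x j hj hc
  exact Nat.notMem_of_lt_sInf hj hc

lemma tb_stay : ∀ x ∈ Vᶜ, ∀ j, j ≤ tb T V S x → (⇑T.symm)^[j] x ∈ Vᶜ := by
  intro x hx j hj
  match j with
  | 0 => exact hx
  | (j+1) =>
    intro hV'
    apply tb_min T V S x j (by omega)
    exact Or.inr hV'

lemma tf_stay : ∀ x ∈ Vᶜ, ∀ j, j < tf T V S x → (⇑T)^[j] x ∈ Vᶜ := by
  intro x hx j hj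
  match j with
  | 0 => exact hx
  | (j+1) =>
    intro hV'
    apply tf_min T V S x (j+1) (by omega) hj
    exact Or.inr hV'

variable {T V S n}
variable (hn : 1 ≤ n)
  (hcov : ∀ x ∈ Vᶜ, ∃ i, i < n ∧ ((⇑T)^[i] x ∈ S ∨ (⇑T.symm)^[i] x ∈ S))

section Bounds
include hn hcov

lemma tf_bound : ∀ x ∈ Vᶜ, ∃ j, 1 ≤ j ∧ j ≤ 2*n ∧ x ∈ tCf T V S j := by
  intro x hx
  by_cases hTn : (⇑T)^[n] x ∈ V
  · exact ⟨n, hn, by omega, Or.inr hTn⟩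
  · obtain ⟨i, hi, hcase⟩ := hcov ((⇑T)^[n] x) hTn
    rcases hcase with h1 | h2
    · refine ⟨i + n, by omega, by omega, ?_⟩
      rw [tCf, Set.mem_preimage, Function.iterate_add_apply]
      exact Or.inl h1
    · refine ⟨n - i, by omega, by omega, ?_⟩
      rw [iter_reduce T n i (by omega)] at h2
      exact Or.inl h2

lemma tb_bound : ∀ x ∈ Vᶜ, ∃ j, j ≤ 2*n ∧ x ∈ tCb T V S j := by
  intro x hx
  by_cases hex : ∃ j, 1 ≤ j ∧ j ≤ n ∧ (⇑T.symm)^[j] x ∈ V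
  · obtain ⟨j, hj1, hjn, hjV⟩ := hex
    refine ⟨j - 1, by omega, Or.inr ?_⟩
    rw [Set.mem_preimage, show j - 1 + 1 = j from by omega]
    exact hjV
  · push_neg at hex
    have hA : (⇑T.symm)^[n] x ∈ Vᶜ := hex n hn le_rfl
    obtain ⟨i, hi, hcase⟩ := hcov _ hA
    rcases hcase with h1 | h2
    · refine ⟨n - i, by omega, Or.inl ?_⟩
      rw [iter_reduce2 T n i (by omega)] at h1
      exact h1
    · refine ⟨i + n, by omega, Or.inl ?_⟩
      rw [Set.mem_preimage, Function.iterate_add_apply]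
      exact h2

lemma tf_spec : ∀ x ∈ Vᶜ, (1 ≤ tf T V S x ∧ tf T V S x ≤ 2*n ∧ x ∈ tCf T V S (tf T V S x)) := by
  intro x hx
  obtain ⟨j, hj1, hj2, hjc⟩ := tf_bound hn hcov x hx
  have hne : {j | 1 ≤ j ∧ x ∈ tCf T V S j}.Nonempty := ⟨j, hj1, hjc⟩
  have hmem := Nat.sInf_mem hne
  exact ⟨hmem.1, le_trans (Nat.sInf_le ⟨hj1, hjc⟩) hj2, hmem.2⟩

lemma tb_spec : ∀ x ∈ Vᶜ, (tb T V S x ≤ 2*n ∧ x ∈ tCb T V S (tb T V S x)) := by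
  intro x hx
  obtain ⟨j, hj2, hjc⟩ := tb_bound hn hcov x hx
  have hne : {j | x ∈ tCb T V S j}.Nonempty := ⟨j, hjc⟩
  exact ⟨le_trans (Nat.sInf_le hjc) hj2, Nat.sInf_mem hne⟩

end Bounds

include hn hcov in
lemma t_level_up : ∀ y ∈ Vᶜ, tb T V S y = 0 → ∀ i < tf T V S y,
    ((⇑T)^[i] y ∈ Vᶜ ∧ tb T V S ((⇑T)^[i] y) = i ∧
      tf T V S ((⇑T)^[i] y) = tf T V S y - i) := by
  intro y hy hb0 i hi
  have hA : (⇑T)^[i] y ∈ Vᶜ := tf_stay T V S y hy i hi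
  have hb0' : y ∈ tCb T V S 0 := by
    have := (tb_spec hn hcov y hy).2
    rwa [hb0] at this
  refine ⟨hA, ?_, ?_⟩
  · -- tb = i
    apply sInf_eq_of_mem_of_min
    · rcases hb0' with h1 | h2
      · left
        rw [Set.mem_preimage, ts_cancel]
        simpa using h1
      · right
        rw [Set.mem_preimage, Function.iterate_succ_apply', ts_cancel]
        rw [Set.mem_preimage, Function.iterate_one] at h2
        exact h2
    · intro j hj hc
      rcases hc with h1 | h2
      · rw [Set.mem_preimage, iter_reduce T i j (by omega)] at h1
        exact tf_min T V S y (i - j) (by omega) (by omega) (Or.inl h1)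
      · have hji : j + 1 ≤ i := by omega
        rw [Set.mem_preimage, iter_reduce T i (j+1) hji] at h2
        have : (⇑T)^[i - (j+1)] y ∈ Vᶜ := tf_stay T V S y hy _ (by omega)
        exact this h2
  · -- tf = tf y - i
    apply sInf_eq_of_mem_of_min
    · refine ⟨by omega, ?_⟩
      rw [tCf, Set.mem_preimage, ← Function.iterate_add_apply,
        show tf T V S y - i + i = tf T V S y from by omega]
      exact (tf_spec hn hcov y hy).2.2
    · intro j hj hc
      rcases hc with ⟨hj1, hc⟩
      rw [tCf, Set.mem_preimage, ← Function.iterate_add_apply] at hc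
      exact tf_min T V S y (j + i) (by omega) (by omega) hc

include hn hcov in
lemma t_to_base : ∀ x ∈ Vᶜ,
    ((⇑T.symm)^[tb T V S x] x ∈ Vᶜ ∧
     tb T V S ((⇑T.symm)^[tb T V S x] x) = 0 ∧
     tf T V S ((⇑T.symm)^[tb T V S x] x) = tb T V S x + tf T V S x ∧
     (⇑T)^[tb T V S x] ((⇑T.symm)^[tb T V S x] x) = x) := by
  intro x hx
  set b := tb T V S x with hbdef
  set y := (⇑T.symm)^[b] x with hydef
  have hyA : y ∈ Vᶜ := tb_stay T V S x hx b le_rfl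
  have hbc : x ∈ tCb T V S b := (tb_spec hn hcov x hx).2
  have hy0 : tb T V S y = 0 := by
    have h0 : y ∈ tCb T V S 0 := by
      rcases hbc with h1 | h2
      · exact Or.inl (by simpa using h1)
      · right
        rw [Set.mem_preimage] at h2 ⊢
        rw [Function.iterate_one, hydef]
        rw [Function.iterate_succ_apply'] at h2
        exact h2
    have := Nat.sInf_le (show (0:ℕ) ∈ {j | y ∈ tCb T V S j} from h0)
    have h5 : tb T V S y = sInf {j | y ∈ tCb T V S j} := rfl
    omega
  refine ⟨hyA, hy0, ?_, st_cancel T b x⟩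
  apply sInf_eq_of_mem_of_min
  · refine ⟨by have := (tf_spec hn hcov x hx).1; omega, ?_⟩
    rw [tCf, Set.mem_preimage, hydef, iter_reduce2' T b (b + tf T V S x) (by omega),
      show b + tf T V S x - b = tf T V S x from by omega]
    exact (tf_spec hn hcov x hx).2.2
  · rintro j hj ⟨hj1, hc⟩
    rw [tCf, Set.mem_preimage, hydef] at hc
    by_cases hjb : j ≤ b
    · rw [iter_reduce2 T b j hjb] at hc
      rcases hc with hcS | hcV
      · exact tb_min T V S x (b - j) (by omega) (Or.inl hcS)
      · exact (tb_stay T V S x hx (b-j) (by omega)) hcV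
    · rw [iter_reduce2' T b j (by omega)] at hc
      exact tf_min T V S x (j - b) (by omega) (by omega) hc

include hn hcov in
lemma t_level_eq (ℓ i : ℕ) (hi : i < ℓ) :
    (⇑T)^[i] '' {x | x ∈ Vᶜ ∧ tb T V S x = 0 ∧ tf T V S x = ℓ} =
      {x | x ∈ Vᶜ ∧ tb T V S x = i ∧ tb T V S x + tf T V S x = ℓ} := by
  ext x
  constructor
  · rintro ⟨y, ⟨hyA, hy0, hyf⟩, rfl⟩
    obtain ⟨h1, h2, h3⟩ := t_level_up hn hcov y hyA hy0 i (by omega)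
    refine ⟨h1, h2, ?_⟩
    rw [h2, h3, hyf]
    omega
  · rintro ⟨hxA, hxb, hxs⟩
    obtain ⟨h1, h2, h3, h4⟩ := t_to_base hn hcov x hxA
    refine ⟨(⇑T.symm)^[tb T V S x] x, ⟨h1, h2, ?_⟩, ?_⟩
    · rw [h3]; omega
    · rw [hxb] at h4 ⊢
      exact h4

include hn hcov in
lemma tBl_eq (ℓ : ℕ) (hℓ : 1 ≤ ℓ) :
    tBl T V S ℓ = {x | x ∈ Vᶜ ∧ tb T V S x = 0 ∧ tf T V S x = ℓ} := by
  ext x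
  constructor
  · rintro ⟨⟨hxA, hxc⟩, hxf, hxmin⟩
    refine ⟨hxA, ?_, ?_⟩
    · have := Nat.sInf_le (show (0:ℕ) ∈ {j | x ∈ tCb T V S j} from hxc)
      have h5 : tb T V S x = sInf {j | x ∈ tCb T V S j} := rfl
      omega
    · apply sInf_eq_of_mem_of_min
      · exact ⟨hℓ, hxf⟩
      · rintro j hj ⟨hj1, hjc⟩
        rw [Set.mem_iInter₂] at hxmin
        exact hxmin j (Finset.mem_Ico.2 ⟨hj1, hj⟩) hjc
  · rintro ⟨hxA, hxb, hxf⟩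
    refine ⟨⟨hxA, ?_⟩, ?_, ?_⟩
    · have := (tb_spec hn hcov x hxA).2
      rwa [hxb] at this
    · have := (tf_spec hn hcov x hxA).2.2
      rwa [hxf] at this
    · rw [Set.mem_iInter₂]
      intro j hj
      rw [Finset.mem_Ico] at hj
      exact tf_min T V S x j hj.1 (by omega)

variable (hV : IsClopen V) (hS : IsClopen S)

include hV hS in
lemma tBl_clopen (ℓ : ℕ) : IsClopen (tBl T V S ℓ) := by
  refine IsClopen.inter (IsClopen.inter hV.compl ?_) (IsClopen.inter ?_ ?_)
  · exact IsClopen.union (hS.preimage (cont_iter_symm T 0)) (hV.preimage (cont_iter_symm T 1))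
  · exact (hS.union hV).preimage (cont_iter T ℓ)
  · refine Set.Finite.isClopen_biInter (Finset.finite_toSet _) (fun j _ => ?_)
    exact (((hS.union hV)).preimage (cont_iter T j)).compl

include hn hcov hV hS in
theorem exists_tower_castle :
    ∃ bsA : Finset (Set Ω × ℕ),
      (∀ p ∈ bsA, IsClopen p.1) ∧ (∀ p ∈ bsA, 1 ≤ p.2) ∧ (∀ p ∈ bsA, p.2 ≤ 4*n) ∧
      (∀ p ∈ bsA, ∀ q ∈ bsA, ∀ i j : ℕ, i < p.2 → j < q.2 → ¬(p = q ∧ i = j) →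
        Disjoint ((⇑T)^[i] '' p.1) ((⇑T)^[j] '' q.1)) ∧
      (∀ x ∈ Vᶜ, ∃ p ∈ bsA, ∃ i, i < p.2 ∧ x ∈ (⇑T)^[i] '' p.1) ∧
      (∀ p ∈ bsA, ∀ i, i < p.2 → (⇑T)^[i] '' p.1 ⊆ Vᶜ) ∧
      (∀ p ∈ bsA, p.1 ⊆ S ∪ (⇑T.symm) ⁻¹' V) ∧
      (∀ p ∈ bsA, (⇑T)^[p.2 - 1] '' p.1 ⊆ (⇑T) ⁻¹' (S ∪ V)) := by
  classical
  refine ⟨(Finset.Icc 1 (4*n)).image (fun ℓ => (tBl T V S ℓ, ℓ)), ?_, ?_, ?_, ?_, ?_, ?_, ?_, ?_⟩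
  · rintro p hp
    obtain ⟨ℓ, hℓ, rfl⟩ := Finset.mem_image.1 hp
    exact tBl_clopen hV hS ℓ
  · rintro p hp
    obtain ⟨ℓ, hℓ, rfl⟩ := Finset.mem_image.1 hp
    exact (Finset.mem_Icc.1 hℓ).1
  · rintro p hp
    obtain ⟨ℓ, hℓ, rfl⟩ := Finset.mem_image.1 hp
    exact (Finset.mem_Icc.1 hℓ).2
  · rintro p hp q hq i j hi hj hne
    obtain ⟨ℓ, hℓ, rfl⟩ := Finset.mem_image.1 hp
    obtain ⟨ℓ', hℓ', rfl⟩ := Finset.mem_image.1 hq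
    rw [Finset.mem_Icc] at hℓ hℓ'
    have heq1 : (⇑T)^[i] '' (tBl T V S ℓ) =
        {x | x ∈ Vᶜ ∧ tb T V S x = i ∧ tb T V S x + tf T V S x = ℓ} := by
      rw [tBl_eq hn hcov ℓ hℓ.1]
      exact t_level_eq hn hcov ℓ i hi
    have heq2 : (⇑T)^[j] '' (tBl T V S ℓ') =
        {x | x ∈ Vᶜ ∧ tb T V S x = j ∧ tb T V S x + tf T V S x = ℓ'} := by
      rw [tBl_eq hn hcov ℓ' hℓ'.1]
      exact t_level_eq hn hcov ℓ' j hj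
    rw [heq1, heq2, Set.disjoint_left]
    rintro x ⟨h1, h2, h3⟩ ⟨h1', h2', h3'⟩
    have hll : ℓ = ℓ' := by omega
    have hij : i = j := by omega
    exact hne ⟨by rw [hll], hij⟩
  · intro x hx
    set ℓ := tb T V S x + tf T V S x with hℓdef
    have h1 := (tb_spec hn hcov x hx).1
    have h2 := (tf_spec hn hcov x hx).1
    have h3 := (tf_spec hn hcov x hx).2.1
    refine ⟨(tBl T V S ℓ, ℓ), ?_, tb T V S x, by omega, ?_⟩
    · exact Finset.mem_image.2 ⟨ℓ, Finset.mem_Icc.2 ⟨by omega, by omega⟩, rfl⟩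
    · rw [tBl_eq hn hcov ℓ (by omega), t_level_eq hn hcov ℓ _ (by omega)]
      exact ⟨hx, rfl, rfl⟩
  · rintro p hp i hi x hx
    obtain ⟨ℓ, hℓ, rfl⟩ := Finset.mem_image.1 hp
    rw [Finset.mem_Icc] at hℓ
    rw [tBl_eq hn hcov ℓ hℓ.1, t_level_eq hn hcov ℓ i hi] at hx
    exact hx.1
  · rintro p hp x hx
    obtain ⟨ℓ, hℓ, rfl⟩ := Finset.mem_image.1 hp
    rw [Finset.mem_Icc] at hℓ
    rw [tBl_eq hn hcov ℓ hℓ.1] at hx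
    obtain ⟨hxA, hxb, hxf⟩ := hx
    have := (tb_spec hn hcov x hxA).2
    rw [hxb] at this
    rcases this with h1 | h2
    · left; simpa using h1
    · right
      rw [Set.mem_preimage, Function.iterate_one] at h2
      exact h2
  · rintro p hp x hx
    obtain ⟨ℓ, hℓ, rfl⟩ := Finset.mem_image.1 hp
    rw [Finset.mem_Icc] at hℓ
    rw [tBl_eq hn hcov ℓ hℓ.1, t_level_eq hn hcov ℓ (ℓ-1) (by omega)] at hx
    obtain ⟨hxA, hxb, hxs⟩ := hx
    have hxf : tf T V S x = 1 := by omega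
    have := (tf_spec hn hcov x hxA).2.2
    rw [hxf] at this
    rw [Set.mem_preimage]
    rw [tCf, Set.mem_preimage, Function.iterate_one] at this
    exact this

end Towers

section Freq
variable {Ω : Type*} [TopologicalSpace Ω] (T : Ω ≃ₜ Ω) (S : Set Ω) (n : ℕ)

lemma visits_card_le (M : ℕ) (hn : 1 ≤ n)
    (hsep : ∀ y ∈ S, ∀ i, 0 < i → i < n → (⇑T)^[i] y ∉ S) (x : Ω) :
    ((Finset.range M).filter (fun m => (⇑T)^[m] x ∈ S)).card ≤ M / n + 1 := by
  classical
  have key : ∀ m ∈ (Finset.range M).filter (fun m => (⇑T)^[m] x ∈ S),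
      ∀ m' ∈ (Finset.range M).filter (fun m => (⇑T)^[m] x ∈ S), m < m' → m + n ≤ m' := by
    intro m hm m' hm' hlt
    rw [Finset.mem_filter] at hm hm'
    by_contra hc
    push_neg at hc
    have h1 : (⇑T)^[m' - m] ((⇑T)^[m] x) ∈ S := by
      rw [← Function.iterate_add_apply, show m' - m + m = m' from by omega]
      exact hm'.2
    exact hsep _ hm.2 (m' - m) (by omega) (by omega) h1
  have hcr : (Finset.range (M/n+1)).card = M/n+1 := Finset.card_range _
  rw [← hcr]
  apply Finset.card_le_card_of_injOn (fun m => m / n)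
  · intro m hm
    rw [Finset.mem_coe, Finset.mem_filter, Finset.mem_range] at hm
    rw [Finset.mem_coe, Finset.mem_range]
    have : m / n ≤ M / n := Nat.div_le_div_right (by omega)
    dsimp only
    omega
  · intro m hm m' hm' heq
    rcases Nat.lt_trichotomy m m' with h | h | h
    · exfalso
      have := key m hm m' hm' h
      have h2 : (m + n) / n ≤ m' / n := Nat.div_le_div_right this
      rw [Nat.add_div_right m (by omega)] at h2
      simp only at heq
      omega
    · exact h
    · exfalso
      have := key m' hm' m hm h
      have h2 : (m' + n) / n ≤ m / n := Nat.div_le_div_right this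
      rw [Nat.add_div_right m' (by omega)] at h2
      simp only at heq
      omega

variable [MeasurableSpace Ω] [BorelSpace Ω]

lemma freq_sum_le (M : ℕ) (hn : 1 ≤ n) (μ : Measure Ω) [IsProbabilityMeasure μ]
    (hS : MeasurableSet S)
    (hsep : ∀ y ∈ S, ∀ i, 0 < i → i < n → (⇑T)^[i] y ∉ S) :
    ∑ m ∈ Finset.range M, μ ((⇑T)^[m] ⁻¹' S) ≤ ((M / n + 1 : ℕ) : ℝ≥0∞) := by
  classical
  have hSm : ∀ m : ℕ, MeasurableSet ((⇑T)^[m] ⁻¹' S) := by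
    intro m
    exact hS.preimage (T.continuous.iterate m).measurable
  have h1 : ∀ m : ℕ, μ ((⇑T)^[m] ⁻¹' S) =
      ∫⁻ x, ((⇑T)^[m] ⁻¹' S).indicator (fun _ => (1:ℝ≥0∞)) x ∂μ := by
    intro m
    rw [lintegral_indicator_const (hSm m), one_mul]
  calc ∑ m ∈ Finset.range M, μ ((⇑T)^[m] ⁻¹' S)
      = ∑ m ∈ Finset.range M, ∫⁻ x, ((⇑T)^[m] ⁻¹' S).indicator (fun _ => (1:ℝ≥0∞)) x ∂μ := by
        exact Finset.sum_congr rfl (fun m _ => h1 m)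
    _ = ∫⁻ x, ∑ m ∈ Finset.range M, ((⇑T)^[m] ⁻¹' S).indicator (fun _ => (1:ℝ≥0∞)) x ∂μ := by
        rw [lintegral_finset_sum]
        intro m _
        exact measurable_const.indicator (hSm m)
    _ ≤ ∫⁻ _, ((M / n + 1 : ℕ) : ℝ≥0∞) ∂μ := by
        apply lintegral_mono
        intro x
        show (∑ m ∈ Finset.range M, ((⇑T)^[m] ⁻¹' S).indicator (fun _ => (1:ℝ≥0∞)) x)
          ≤ ((M / n + 1 : ℕ) : ℝ≥0∞)
        have h2 : ∑ m ∈ Finset.range M, ((⇑T)^[m] ⁻¹' S).indicator (fun _ => (1:ℝ≥0∞)) x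
            = (((Finset.range M).filter (fun m => (⇑T)^[m] x ∈ S)).card : ℝ≥0∞) := by
          rw [← Finset.sum_boole]
          apply Finset.sum_congr rfl
          intro m _
          rw [Set.indicator_apply]
          congr 1
        rw [h2]
        have h3 := visits_card_le T S n M hn hsep x
        exact_mod_cast Nat.cast_le.2 h3
    _ = ((M / n + 1 : ℕ) : ℝ≥0∞) := by
        rw [lintegral_const, measure_univ, mul_one]

lemma sum_range_two_mul (g : ℕ → ℝ≥0∞) (M : ℕ) :
    ∑ m ∈ Finset.range (2*M), g m = ∑ j ∈ Finset.range M, (g (2*j) + g (2*j+1)) := by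
  induction M with
  | zero => simp
  | succ M ih =>
    rw [Finset.sum_range_succ, ← ih, show 2*(M+1) = (2*M+1)+1 from by ring,
      Finset.sum_range_succ, Finset.sum_range_succ]
    ring

end Freq


section Assembly
variable {Ω : Type*}

lemma iter_comm [TopologicalSpace Ω] (T : Ω ≃ₜ Ω) (m i : ℕ) (x : Ω) :
    (⇑T)^[m] ((⇑T.symm)^[i] x) = (⇑T.symm)^[i] ((⇑T)^[m] x) := by
  rcases le_total i m with h | h
  · rw [iter_reduce2' T i m h, iter_reduce T m i h]
  · rw [iter_reduce2 T i m h, iter_reduce' T m i h]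

lemma shift_image [TopologicalSpace Ω] (T : Ω ≃ₜ Ω) (m i : ℕ) (C : Set Ω) :
    (⇑T)^[i] '' ((⇑T)^[m] ⁻¹' C) = (⇑T)^[m] ⁻¹' ((⇑T)^[i] '' C) := by
  rw [image_iter, image_iter]
  ext x
  simp only [Set.mem_preimage]
  rw [iter_comm]

lemma berr_shift [TopologicalSpace Ω] (T : Ω ≃ₜ Ω) (p : Set Ω × ℕ) (m : ℕ) :
    berr T ((⇑T)^[m] ⁻¹' p.1, p.2) = (⇑T)^[m] ⁻¹' (berr T p) := by
  ext z
  simp only [berr, Set.mem_setOf_eq, Set.mem_preimage]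
  constructor
  · rintro ⟨h1, h2⟩
    refine ⟨h1, ?_⟩
    intro heq
    apply h2
    have : (⇑T)^[p.2] ((⇑T)^[m] z) = (⇑T)^[m] ((⇑T)^[p.2] z) := by
      rw [← Function.iterate_add_apply, ← Function.iterate_add_apply, Nat.add_comm]
    apply iter_inj T m
    rw [← this, heq]
  · rintro ⟨h1, h2⟩
    refine ⟨h1, ?_⟩
    intro heq
    apply h2
    rw [← Function.iterate_add_apply, Nat.add_comm, Function.iterate_add_apply, heq]

theorem stmt_18' {Ω : Type*} [TopologicalSpace Ω] [CompactSpace Ω]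
    [TopologicalSpace.MetrizableSpace Ω] [TotallyDisconnectedSpace Ω] [PerfectSpace Ω]
    [Nonempty Ω] [MeasurableSpace Ω] [BorelSpace Ω]
    (T : Ω ≃ₜ Ω)
    (ε : ℝ) (hε : 0 < ε) (k : ℕ) (μ : Fin k → Measure Ω)
    (hμ : ∀ i, IsProbabilityMeasure (μ i)) :
    ∃ P : Ω ≃ₜ Ω,
      (∃ N : ℕ, 1 ≤ N ∧ ∀ x : Ω, (P : Ω → Ω)^[N] x = x) ∧
      (∀ i : Fin k,
        μ i ({x : Ω | P x ≠ T x} ∪ {x : Ω | P.symm x ≠ T.symm x}) < ENNReal.ofReal ε) := by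
  classical
  letI : MetricSpace Ω := TopologicalSpace.metrizableSpaceMetric Ω
  set ε₂ := ENNReal.ofReal ε with hε₂def
  have hε₂ : 0 < ε₂ := ENNReal.ofReal_pos.2 hε
  have hε₂top : ε₂ ≠ ⊤ := ENNReal.ofReal_ne_top
  have hε₂half : 0 < ε₂/2 := ENNReal.half_pos (ne_of_gt hε₂)
  have hhalf_ne_top : ε₂/2 ≠ ⊤ := by
    intro h
    exact hε₂top (by
      have := ENNReal.add_halves ε₂
      rw [← this, h]
      simp)
  -- choose n
  have h3k : ((3*k : ℕ) : ℝ≥0∞) / (ε₂/2) ≠ ⊤ :=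
    (ENNReal.div_lt_top (ENNReal.natCast_ne_top (3*k)) (ne_of_gt hε₂half)).ne
  obtain ⟨n₀, hn₀⟩ := ENNReal.exists_nat_gt h3k
  set n := n₀ + 1 with hndef
  have hn1 : 1 ≤ n := by omega
  have hkey : ((3*k : ℕ) : ℝ≥0∞) < (n : ℝ≥0∞) * (ε₂/2) := by
    have h1 : ((3*k : ℕ) : ℝ≥0∞) / (ε₂/2) < (n : ℝ≥0∞) := by
      refine lt_of_lt_of_le hn₀ ?_
      have h2 : n₀ ≤ n := by rw [hndef]; omega
      exact_mod_cast h2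
    exact (ENNReal.div_lt_iff (Or.inl (ne_of_gt hε₂half)) (Or.inl hhalf_ne_top)).1 h1
  set L := n.factorial with hLdef
  have hL1 : 1 ≤ L := Nat.factorial_pos n
  haveI : NeZero L := ⟨by omega⟩
  set Jh := 2*n + L + 2 with hJhdef
  -- the control measure
  set ν : Measure Ω :=
    ∑ i, ∑ j ∈ Finset.range (Jh+1), ((μ i).map ((⇑T)^[j]) + (μ i).map ((⇑T.symm)^[j]))
    with hνdef
  have hνapply : ∀ X : Set Ω, ν X =
      ∑ i, ∑ j ∈ Finset.range (Jh+1),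
        (((μ i).map ((⇑T)^[j])) X + ((μ i).map ((⇑T.symm)^[j])) X) := by
    intro X
    rw [hνdef, Measure.finset_sum_apply]
    refine Finset.sum_congr rfl (fun i _ => ?_)
    rw [Measure.finset_sum_apply]
    refine Finset.sum_congr rfl (fun j _ => ?_)
    rw [Measure.add_apply]
  haveI hνfin : IsFiniteMeasure ν := by
    constructor
    rw [hνapply]
    rw [ENNReal.sum_lt_top]
    intro i _
    rw [ENNReal.sum_lt_top]
    intro j _
    haveI := hμ i
    haveI : IsProbabilityMeasure ((μ i).map ((⇑T)^[j])) :=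
      Measure.isProbabilityMeasure_map (cont_iter T j).measurable.aemeasurable
    haveI : IsProbabilityMeasure ((μ i).map ((⇑T.symm)^[j])) :=
      Measure.isProbabilityMeasure_map (cont_iter_symm T j).measurable.aemeasurable
    rw [measure_univ, measure_univ]
    simp
  have hmap_le : ∀ (i : Fin k) (j : ℕ), j ≤ Jh → ∀ X : Set Ω, MeasurableSet X →
      μ i ((⇑T)^[j] ⁻¹' X) ≤ ν X ∧ μ i ((⇑T.symm)^[j] ⁻¹' X) ≤ ν X := by
    intro i j hj X hX
    have e1 : ((μ i).map ((⇑T)^[j])) X = μ i ((⇑T)^[j] ⁻¹' X) :=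
      Measure.map_apply (cont_iter T j).measurable hX
    have e2 : ((μ i).map ((⇑T.symm)^[j])) X = μ i ((⇑T.symm)^[j] ⁻¹' X) :=
      Measure.map_apply (cont_iter_symm T j).measurable hX
    have hterm : ((μ i).map ((⇑T)^[j])) X + ((μ i).map ((⇑T.symm)^[j])) X ≤ ν X := by
      rw [hνapply]
      refine le_trans ?_ (Finset.single_le_sum
        (f := fun i' => ∑ j' ∈ Finset.range (Jh+1),
          (((μ i').map ((⇑T)^[j'])) X + ((μ i').map ((⇑T.symm)^[j'])) X))
        (fun i' _ => zero_le) (Finset.mem_univ i))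
      exact Finset.single_le_sum
        (f := fun j' => ((μ i).map ((⇑T)^[j'])) X + ((μ i).map ((⇑T.symm)^[j'])) X)
        (fun j' _ => zero_le) (Finset.mem_range.2 (by omega))
    constructor
    · rw [← e1]; exact le_trans le_self_add hterm
    · rw [← e2]; exact le_trans le_add_self hterm
  have hcomp_le : ∀ (i : Fin k) (a b : ℕ), a ≤ Jh → b ≤ Jh → ∀ X : Set Ω, MeasurableSet X →
      μ i ((⇑T)^[a] ⁻¹' ((⇑T.symm)^[b] ⁻¹' X)) ≤ ν X := by
    intro i a b ha hb X hX
    rcases le_total b a with h | h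
    · have heq : (⇑T)^[a] ⁻¹' ((⇑T.symm)^[b] ⁻¹' X) = (⇑T)^[a-b] ⁻¹' X := by
        ext x
        simp only [Set.mem_preimage]
        rw [iter_reduce T a b h]
      rw [heq]
      exact (hmap_le i (a-b) (by omega) X hX).1
    · have heq : (⇑T)^[a] ⁻¹' ((⇑T.symm)^[b] ⁻¹' X) = (⇑T.symm)^[b-a] ⁻¹' X := by
        ext x
        simp only [Set.mem_preimage]
        rw [iter_reduce' T a b h]
      rw [heq]
      exact (hmap_le i (b-a) (by omega) X hX).2
  have hcomp_le' : ∀ (i : Fin k) (a c : ℕ), a + c ≤ Jh → ∀ X : Set Ω, MeasurableSet X →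
      μ i ((⇑T)^[a] ⁻¹' ((⇑T)^[c] ⁻¹' X)) ≤ ν X := by
    intro i a c hac X hX
    have heq : (⇑T)^[a] ⁻¹' ((⇑T)^[c] ⁻¹' X) = (⇑T)^[c+a] ⁻¹' X := by
      ext x
      simp only [Set.mem_preimage]
      rw [Function.iterate_add_apply]
    rw [heq]
    exact (hmap_le i (c+a) (by omega) X hX).1
  -- K-castle
  set c2 : ℝ≥0∞ := ((2*(L+2) : ℕ) : ℝ≥0∞) with hc2def
  have hc2ne : c2 ≠ 0 := by
    rw [hc2def]
    exact Nat.cast_ne_zero.2 (by omega)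
  have hc2top : c2 ≠ ⊤ := by
    rw [hc2def]
    exact ENNReal.natCast_ne_top _
  set ε' := ε₂ / (2 * c2) with hε'def
  have hε'pos : 0 < ε' := by
    rw [hε'def]
    refine ENNReal.div_pos (ne_of_gt hε₂) ?_
    exact ENNReal.mul_ne_top (by simp) hc2top
  have hc2e : c2 * ε' = ε₂ / 2 := by
    rw [hε'def, ← mul_div_assoc, mul_comm 2 c2, ENNReal.mul_div_mul_left _ _ hc2ne hc2top]
  obtain ⟨bsK, Bad, hKcl, hKpos, hKle, hKdisj, hKcov, hBadm, hBadν, hKberr, hKexc⟩ :=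
    exists_K_castle T L hL1 ν ε' hε'pos
  set V := ⋃ p ∈ bsK, ⋃ i ∈ Finset.range p.2, (⇑T)^[i] '' p.1 with hVdef
  have hVclopen : IsClopen V := by
    refine Set.Finite.isClopen_biUnion (Finset.finite_toSet _) (fun p hp => ?_)
    refine Set.Finite.isClopen_biUnion (Finset.finite_toSet _) (fun i _ => ?_)
    exact isClopen_image_iter T (hKcl p hp) i
  have hKV : ∀ z : Ω, (⇑T)^[L] z = z → z ∈ V := by
    intro z hz
    obtain ⟨p, hp, i, hi, hmem⟩ := hKcov z hz
    exact Set.mem_biUnion hp (Set.mem_biUnion (Finset.mem_range.2 hi) hmem)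
  have hVBad : ∀ x ∈ V, (⇑T)^[L] x ≠ x → x ∈ Bad := by
    intro x hx hne
    rw [hVdef] at hx
    simp only [Set.mem_iUnion] at hx
    obtain ⟨p, hp, i, hi, hmem⟩ := hx
    exact hKexc p hp i (Finset.mem_range.1 hi) x hmem hne
  -- marker
  have hdistinct : ∀ x ∈ Vᶜ, ∀ i j : ℕ, i < j → j < n → (⇑T)^[i] x ≠ (⇑T)^[j] x := by
    intro x hx i j hij hjn heq
    apply hx
    set y := (⇑T)^[i] x with hy
    have hp : (⇑T)^[j-i] y = y := by
      rw [hy, ← Function.iterate_add_apply, show j - i + i = j from by omega, ← heq]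
    have hpL : (⇑T)^[L] y = y := iter_fix_dvd T hp (Nat.dvd_factorial (by omega) (by omega))
    have hyK : y ∈ kK T L := hpL
    have hxK : x ∈ kK T L := by
      have := kK_iter_symm T L hyK i
      rw [hy, ts_cancel] at this
      exact this
    exact hKV x hxK
  obtain ⟨S₀, hS₀cl, hS₀A, hS₀sep, hS₀cov⟩ :=
    marker_lemma T n Vᶜ hVclopen.compl hn1 hdistinct
  -- tower castle on the complement of V
  obtain ⟨bsA, hAcl, hApos, hAle, hAdisj, hAcov, hAsubA, hAbase, hAtop⟩ :=
    exists_tower_castle (T := T) (V := V) (S := S₀) (n := n) hn1 hS₀cov hVclopen hS₀cl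
  -- combined castle
  set bs := bsK ∪ bsA with hbsdef
  set H := L + 4*n + 1 with hHdef
  have hcl' : ∀ p ∈ bs, IsClopen p.1 := by
    intro p hp
    rcases Finset.mem_union.1 hp with h | h
    · exact hKcl p h
    · exact hAcl p h
  have hpos' : ∀ p ∈ bs, 1 ≤ p.2 := by
    intro p hp
    rcases Finset.mem_union.1 hp with h | h
    · exact hKpos p h
    · exact hApos p h
  have hBd' : ∀ p ∈ bs, p.2 ≤ H := by
    intro p hp
    rcases Finset.mem_union.1 hp with h | h
    · have := hKle p h; omega
    · have := hAle p h; omega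
  have hlevV : ∀ p ∈ bsK, ∀ i, i < p.2 → (⇑T)^[i] '' p.1 ⊆ V := by
    intro p hp i hi x hx
    exact Set.mem_biUnion hp (Set.mem_biUnion (Finset.mem_range.2 hi) hx)
  have hdisj' : ∀ p ∈ bs, ∀ q ∈ bs, ∀ i j : ℕ, i < p.2 → j < q.2 → ¬(p = q ∧ i = j) →
      Disjoint ((⇑T)^[i] '' p.1) ((⇑T)^[j] '' q.1) := by
    intro p hp q hq i j hi hj hne
    rcases Finset.mem_union.1 hp with hpK | hpA <;> rcases Finset.mem_union.1 hq with hqK | hqA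
    · exact hKdisj p hpK q hqK i j hi hj hne
    · exact Set.disjoint_of_subset (hlevV p hpK i hi) (hAsubA q hqA j hj) disjoint_compl_right
    · exact (Set.disjoint_of_subset (hlevV q hqK j hj) (hAsubA p hpA i hi)
        disjoint_compl_right).symm
    · exact hAdisj p hpA q hqA i j hi hj hne
  have hcov' : ∀ x : Ω, ∃ p ∈ bs, ∃ i, i < p.2 ∧ x ∈ (⇑T)^[i] '' p.1 := by
    intro x
    by_cases hx : x ∈ V
    · rw [hVdef] at hx
      simp only [Set.mem_iUnion] at hx
      obtain ⟨p, hp, i, hi, hmem⟩ := hx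
      exact ⟨p, Finset.mem_union_left _ hp, i, Finset.mem_range.1 hi, hmem⟩
    · obtain ⟨p, hp, i, hi, hmem⟩ := hAcov x hx
      exact ⟨p, Finset.mem_union_right _ hp, i, hi, hmem⟩
  -- frequency selection
  set g : ℕ → ℝ≥0∞ := fun m => ∑ i, μ i ((⇑T)^[m] ⁻¹' S₀) with hgdef
  have hgtot : ∑ m ∈ Finset.range (2*n), g m ≤ ((3*k : ℕ) : ℝ≥0∞) := by
    rw [hgdef]
    rw [Finset.sum_comm]
    calc ∑ i, ∑ m ∈ Finset.range (2*n), μ i ((⇑T)^[m] ⁻¹' S₀)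
        ≤ ∑ _i : Fin k, ((2*n/n + 1 : ℕ) : ℝ≥0∞) := by
          refine Finset.sum_le_sum (fun i _ => ?_)
          haveI := hμ i
          exact freq_sum_le T S₀ n (2*n) hn1 (μ i) hS₀cl.isClosed.measurableSet hS₀sep
      _ = ((3*k : ℕ) : ℝ≥0∞) := by
          rw [Finset.sum_const, Finset.card_univ, Fintype.card_fin]
          have h2n : 2*n/n = 2 := Nat.mul_div_cancel 2 (by omega)
          rw [h2n]
          push_cast
          ring
  have hsel : ∃ m, m + 1 < 2*n ∧ g m + g (m+1) < ε₂/2 := by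
    by_contra hc
    push_neg at hc
    have hlow : ∀ j ∈ Finset.range n, ε₂/2 ≤ g (2*j) + g (2*j+1) := by
      intro j hj
      rw [Finset.mem_range] at hj
      by_cases h2j : 2*j + 1 < 2*n
      · exact hc (2*j) h2j
      · omega
    have h1 : (Finset.range n).card • (ε₂/2) ≤ ∑ j ∈ Finset.range n, (g (2*j) + g (2*j+1)) :=
      Finset.card_nsmul_le_sum _ _ _ hlow
    rw [Finset.card_range, ← sum_range_two_mul] at h1
    have h2 : (n : ℝ≥0∞) * (ε₂/2) ≤ ((3*k : ℕ) : ℝ≥0∞) := by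
      calc (n : ℝ≥0∞) * (ε₂/2) = n • (ε₂/2) := (nsmul_eq_mul _ _).symm
        _ ≤ ∑ m ∈ Finset.range (2*n), g m := h1
        _ ≤ ((3*k : ℕ) : ℝ≥0∞) := hgtot
    exact absurd hkey (not_lt.2 h2)
  obtain ⟨m, hm2n, hmg⟩ := hsel
  -- shifted castle
  set bsm := bs.image (fun p => ((⇑T)^[m] ⁻¹' p.1, p.2)) with hbsmdef
  have hcl_m : ∀ p ∈ bsm, IsClopen p.1 := by
    rintro p' hp'
    obtain ⟨p, hp, rfl⟩ := Finset.mem_image.1 hp'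
    exact (hcl' p hp).preimage (cont_iter T m)
  have hpos_m : ∀ p ∈ bsm, 1 ≤ p.2 := by
    rintro p' hp'
    obtain ⟨p, hp, rfl⟩ := Finset.mem_image.1 hp'
    exact hpos' p hp
  have hBd_m : ∀ p ∈ bsm, p.2 ≤ H := by
    rintro p' hp'
    obtain ⟨p, hp, rfl⟩ := Finset.mem_image.1 hp'
    exact hBd' p hp
  have hdisj_m : ∀ p ∈ bsm, ∀ q ∈ bsm, ∀ i j : ℕ, i < p.2 → j < q.2 → ¬(p = q ∧ i = j) →
      Disjoint ((⇑T)^[i] '' p.1) ((⇑T)^[j] '' q.1) := by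
    rintro p' hp' q' hq' i j hi hj hne
    obtain ⟨p, hp, rfl⟩ := Finset.mem_image.1 hp'
    obtain ⟨q, hq, rfl⟩ := Finset.mem_image.1 hq'
    rw [shift_image, shift_image]
    refine Disjoint.preimage _ ?_
    refine hdisj' p hp q hq i j hi hj ?_
    rintro ⟨rfl, rfl⟩
    exact hne ⟨rfl, rfl⟩
  have hcov_m : ∀ x : Ω, ∃ p ∈ bsm, ∃ i, i < p.2 ∧ x ∈ (⇑T)^[i] '' p.1 := by
    intro x
    obtain ⟨p, hp, i, hi, hmem⟩ := hcov' ((⇑T)^[m] x)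
    refine ⟨((⇑T)^[m] ⁻¹' p.1, p.2), Finset.mem_image.2 ⟨p, hp, rfl⟩, i, hi, ?_⟩
    rw [shift_image]
    exact hmem
  obtain ⟨P, hPord, hDT, hDB⟩ :=
    castle_exists_P T bsm H hcl_m hpos_m hBd_m (by omega) hdisj_m hcov_m
  refine ⟨P, hPord, ?_⟩
  intro i
  haveI := hμ i
  -- the bad set
  set Bset := ⋃ c ∈ Finset.range (L+2), (((⇑T.symm)^[c] ⁻¹' Bad) ∪ ((⇑T)^[c] ⁻¹' Bad))
    with hBsetdef
  set Inner := (S₀ ∪ (⇑T) ⁻¹' S₀) ∪ Bset with hInnerdef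
  have hBadBset : ∀ c, c < L + 2 → ((⇑T.symm)^[c] ⁻¹' Bad) ⊆ Bset ∧
      ((⇑T)^[c] ⁻¹' Bad) ⊆ Bset := by
    intro c hc
    constructor
    · intro x hx
      exact Set.mem_biUnion (Finset.mem_range.2 hc) (Or.inl hx)
    · intro x hx
      exact Set.mem_biUnion (Finset.mem_range.2 hc) (Or.inr hx)
  have hVK' : ∀ x, x ∈ V → x ∉ kK T L → x ∈ Bad := fun x h1 h2 => hVBad x h1 h2
  have hblock : ∀ p ∈ bs, (berr T p ⊆ Inner ∧ (⇑T)^[p.2 - 1] '' berr T p ⊆ Inner) := by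
    intro p hp
    rcases Finset.mem_union.1 hp with hpK | hpA
    · -- K-blocks: base errors are in Bad
      have hb : berr T p ⊆ Bad := by
        rintro z ⟨hz1, hz2⟩
        exact hKberr p hpK z hz1 hz2
      constructor
      · intro z hz
        right
        refine (hBadBset 0 (by omega)).1 ?_
        simpa using hb hz
      · intro x hx
        obtain ⟨z, hz, rfl⟩ := hx
        right
        refine (hBadBset (p.2-1) (by have := hKle p hpK; omega)).1 ?_
        rw [Set.mem_preimage, ts_cancel]
        exact hb hz
    · -- tower blocks
      have hp1A : p.1 ⊆ Vᶜ := by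
        have := hAsubA p hpA 0 (by have := hApos p hpA; omega)
        intro z hz
        refine this ?_
        simpa using hz
      constructor
      · rintro z ⟨hz1, _⟩
        have h1 := hAbase p hpA hz1
        rcases h1 with h | h
        · left; left; exact h
        · right
          refine (hBadBset 1 (by omega)).1 ?_
          rw [Set.mem_preimage, Function.iterate_one]
          rw [Set.mem_preimage] at h
          refine hVK' _ h ?_
          intro hK
          have : z ∈ kK T L := by
            have := kK_T T L hK
            rwa [T.apply_symm_apply] at this
          exact (hp1A hz1) (hKV z this)
      · intro x hx
        have hx1 : x ∈ (⇑T)^[p.2-1] '' p.1 := by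
          obtain ⟨z, hz, rfl⟩ := hx
          exact ⟨z, hz.1, rfl⟩
        have h1 := hAtop p hpA hx1
        rw [Set.mem_preimage] at h1
        have hxA : x ∈ Vᶜ := hAsubA p hpA (p.2-1) (by have := hApos p hpA; omega) hx1
        rcases h1 with h | h
        · left; right; exact h
        · right
          refine (hBadBset 1 (by omega)).2 ?_
          rw [Set.mem_preimage, Function.iterate_one]
          refine hVK' _ h ?_
          intro hK
          have : x ∈ kK T L := by
            have h2 := kK_symm T L hK
            rwa [T.symm_apply_apply] at h2
          exact hxA (hKV x this)
  -- main inclusion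
  have hsub : {x | P x ≠ T x} ∪ {x | P.symm x ≠ T.symm x} ⊆ (⇑T)^[m] ⁻¹' Inner := by
    intro x hx
    rcases hx with hx | hx
    · have h1 := hDT hx
      simp only [Set.mem_iUnion] at h1
      obtain ⟨p', hp', hmem⟩ := h1
      obtain ⟨p, hp, rfl⟩ := Finset.mem_image.1 hp'
      rw [show ((⇑T)^[m] ⁻¹' p.1, p.2).2 = p.2 from rfl, berr_shift, shift_image] at hmem
      exact Set.preimage_mono (hblock p hp).2 hmem
    · have h1 := hDB hx
      simp only [Set.mem_iUnion] at h1
      obtain ⟨p', hp', hmem⟩ := h1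
      obtain ⟨p, hp, rfl⟩ := Finset.mem_image.1 hp'
      rw [berr_shift] at hmem
      exact Set.preimage_mono (hblock p hp).1 hmem
  -- measure estimate
  have hBsetpre : (⇑T)^[m] ⁻¹' Inner ⊆
      ((⇑T)^[m] ⁻¹' S₀ ∪ (⇑T)^[m] ⁻¹' ((⇑T) ⁻¹' S₀)) ∪ (⇑T)^[m] ⁻¹' Bset := by
    rw [hInnerdef]
    intro x hx
    rw [Set.mem_preimage] at hx
    rcases hx with (h | h) | h
    · exact Or.inl (Or.inl h)
    · exact Or.inl (Or.inr h)
    · exact Or.inr h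
  have hterm1 : μ i ((⇑T)^[m] ⁻¹' S₀) ≤ g m := by
    rw [hgdef]
    exact Finset.single_le_sum (f := fun i' => μ i' ((⇑T)^[m] ⁻¹' S₀))
      (fun i' _ => zero_le) (Finset.mem_univ i)
  have hterm2 : μ i ((⇑T)^[m] ⁻¹' ((⇑T) ⁻¹' S₀)) ≤ g (m+1) := by
    have heq : (⇑T)^[m] ⁻¹' ((⇑T) ⁻¹' S₀) = (⇑T)^[m+1] ⁻¹' S₀ := by
      ext x
      simp only [Set.mem_preimage]
      rw [Function.iterate_succ_apply']
    rw [heq, hgdef]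
    exact Finset.single_le_sum (f := fun i' => μ i' ((⇑T)^[m+1] ⁻¹' S₀))
      (fun i' _ => zero_le) (Finset.mem_univ i)
  have hterm3 : μ i ((⇑T)^[m] ⁻¹' Bset) < ε₂/2 := by
    have hmJ : m ≤ Jh := by omega
    have h1 : μ i ((⇑T)^[m] ⁻¹' Bset) ≤ ∑ c ∈ Finset.range (L+2),
        (ν Bad + ν Bad) := by
      rw [hBsetdef, Set.preimage_iUnion₂]
      refine le_trans (measure_biUnion_finset_le _ _) ?_
      refine Finset.sum_le_sum (fun c hc => ?_)
      rw [Finset.mem_range] at hc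
      rw [Set.preimage_union]
      refine le_trans (measure_union_le _ _) ?_
      refine add_le_add ?_ ?_
      · exact hcomp_le i m c hmJ (by omega) Bad hBadm
      · exact hcomp_le' i m c (by omega) Bad hBadm
    have h2 : ∑ c ∈ Finset.range (L+2), (ν Bad + ν Bad) = c2 * ν Bad := by
      rw [Finset.sum_const, Finset.card_range, nsmul_eq_mul, hc2def]
      push_cast
      ring
    rw [h2] at h1
    refine lt_of_le_of_lt h1 ?_
    rw [← hc2e]
    exact ENNReal.mul_lt_mul_right hc2ne hc2top hBadν
  calc μ i ({x : Ω | P x ≠ T x} ∪ {x : Ω | P.symm x ≠ T.symm x})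
      ≤ μ i ((⇑T)^[m] ⁻¹' Inner) := measure_mono hsub
    _ ≤ μ i (((⇑T)^[m] ⁻¹' S₀ ∪ (⇑T)^[m] ⁻¹' ((⇑T) ⁻¹' S₀)) ∪ (⇑T)^[m] ⁻¹' Bset) :=
        measure_mono hBsetpre
    _ ≤ (μ i ((⇑T)^[m] ⁻¹' S₀) + μ i ((⇑T)^[m] ⁻¹' ((⇑T) ⁻¹' S₀)))
        + μ i ((⇑T)^[m] ⁻¹' Bset) := by
        refine le_trans (measure_union_le _ _) ?_
        exact add_le_add (measure_union_le _ _) le_rfl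
    _ ≤ (g m + g (m+1)) + μ i ((⇑T)^[m] ⁻¹' Bset) := by
        exact add_le_add (add_le_add hterm1 hterm2) le_rfl
    _ < ε₂/2 + ε₂/2 := ENNReal.add_lt_add hmg hterm3
    _ = ε₂ := ENNReal.add_halves ε₂

end Assembly



/-- **Finite-order homeomorphisms are uniformly dense in `Homeo(Ω)`.** Let `T` be any
homeomorphism of a Cantor set `Ω`. For every `ε > 0` and Borel probability measures
`μ₁, …, μ_k` there is a finite-order homeomorphism `P` with `μᵢ(E(P, T)) < ε` for all
`i`, where `E(P, T) = {x : Px ≠ Tx} ∪ {x : P⁻¹x ≠ T⁻¹x}`. -/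
theorem stmt_18 {Ω : Type*} [TopologicalSpace Ω] [CompactSpace Ω]
    [TopologicalSpace.MetrizableSpace Ω] [TotallyDisconnectedSpace Ω] [PerfectSpace Ω]
    [Nonempty Ω] [MeasurableSpace Ω] [BorelSpace Ω]
    (T : Ω ≃ₜ Ω)
    (ε : ℝ) (hε : 0 < ε) (k : ℕ) (μ : Fin k → Measure Ω)
    (hμ : ∀ i, IsProbabilityMeasure (μ i)) :
    ∃ P : Ω ≃ₜ Ω,
      (∃ N : ℕ, 1 ≤ N ∧ ∀ x : Ω, (P : Ω → Ω)^[N] x = x) ∧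
      (∀ i : Fin k,
        μ i ({x : Ω | P x ≠ T x} ∪ {x : Ω | P.symm x ≠ T.symm x}) < ENNReal.ofReal ε) := by
  exact stmt_18' T ε hε k μ hμ
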